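/- arXiv:1701.00375 — 3 statements merged into one kernel-verified Lean document; each statement's English description precedes it below -/
import Mathlib

section
/- Let N : {1,2,…} → ℚ be any sequence and define a_i := (1/i)·Σ_{d ∣ i} μ(i/d)·N_d and π_w(N) := Σ_{λ : |λ| = w} (−1)^{ℓ(λ)} · Π_{i≥1} C(a_i, λ_i), the sum over all partitions λ of weight w. Then in the ring of formal power series ℚ[[t]] one has exp(−Σ_{i≥1} N_i·t^i/i) = Σ_{w≥0} π_w(N)·t^w; that is, for every w ≥ 0 the coefficient of t^w in exp(−Σ_{i≥1} N_i·t^i/i) equals π_w(N). -/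
open scoped Classical

/-- Generalized binomial coefficient `C(a, k) = a(a-1)⋯(a-k+1)/k!` for `a : ℚ`. -/
def genChoose (a : ℚ) (k : ℕ) : ℚ :=
  (∏ j ∈ Finset.range k, (a - (j : ℚ))) / (Nat.factorial k : ℚ)

/-- `a N i = (1/i) Σ_{d ∣ i} μ(i/d) N d`, the Möbius convolution divided by `i`. -/
noncomputable def moebiusConv (N : ℕ → ℚ) (i : ℕ) : ℚ :=
  (1 / (i : ℚ)) * ∑ d ∈ i.divisors, ((ArithmeticFunction.moebius (i / d) : ℤ) : ℚ) * N d

/-- `π_w(N) = Σ_{|λ| = w} (−1)^{ℓ(λ)} Π_{i ≥ 1} C(a_i, λ_i)`, the sum over all partitions `λ`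
of weight `w`, where `λ_i` is the number of parts of `λ` equal to `i` and
`a_i = (1/i) Σ_{d ∣ i} μ(i/d) N d`. -/
noncomputable def piW (N : ℕ → ℚ) (w : ℕ) : ℚ :=
  ∑ p : Nat.Partition w, (-1 : ℚ) ^ (Multiset.card p.parts) *
    ∏ i ∈ p.parts.toFinset, genChoose (moebiusConv N i) (p.parts.count i)

/-- The formal power series `−Σ_{i ≥ 1} N_i t^i / i` over `ℚ`. -/
noncomputable def negLogZeta (N : ℕ → ℚ) : PowerSeries ℚ :=
  PowerSeries.mk fun i => if i = 0 then 0 else -(N i) / (i : ℚ)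

/-- The formal exponential `exp(f) = Σ_{n ≥ 0} f^n / n!` of a power series `f` with zero
constant term: its coefficient of `t^w` is `Σ_{n ≤ w} (coeff of t^w in f^n)/n!`
(for a series with zero constant coefficient, the terms with `n > w` vanish). -/
noncomputable def expPS (f : PowerSeries ℚ) : PowerSeries ℚ :=
  PowerSeries.mk fun w =>
    ∑ n ∈ Finset.range (w + 1), (PowerSeries.coeff w (f ^ n)) / (Nat.factorial n : ℚ)

open PowerSeries Finset

lemma genChoose_zero (a : ℚ) : genChoose a 0 = 1 := by simp [genChoose]

lemma prod_range_cast_sub (m k : ℕ) :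
    (∏ j ∈ Finset.range k, ((m : ℚ) - (j : ℚ))) = (m.descFactorial k : ℚ) := by
  induction k with
  | zero => simp
  | succ k ih =>
    rw [Finset.prod_range_succ, ih, Nat.descFactorial_succ]
    rcases le_or_gt (k + 1) m with h | h
    · rw [Nat.cast_mul, Nat.cast_sub (Nat.le_of_succ_le h)]
      ring
    · have h1 : m.descFactorial k = 0 ∨ (m : ℚ) - k = 0 := by
        rcases Nat.lt_succ_iff_lt_or_eq.mp h with h' | h'
        · exact Or.inl (Nat.descFactorial_eq_zero_iff_lt.mpr h')
        · exact Or.inr (by rw [h']; ring)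
      rw [Nat.cast_mul]
      rcases h1 with h' | h'
      · rw [h']; push_cast; ring
      · have hm : m = k := by
          have := sub_eq_zero.mp h'
          exact_mod_cast this
        simp [hm]

lemma genChoose_natCast (m k : ℕ) : genChoose (m : ℚ) k = (m.choose k : ℚ) := by
  rw [genChoose, prod_range_cast_sub, Nat.descFactorial_eq_factorial_mul_choose]
  push_cast
  rw [mul_comm, mul_div_assoc, div_self (by exact_mod_cast (Nat.factorial_pos k).ne'), mul_one]

lemma coeff_pow_eq_zero {f : PowerSeries ℚ} (hf : constantCoeff f = 0) {j m : ℕ}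
    (h : j < m) : coeff j (f ^ m) = 0 := by
  have : (X : PowerSeries ℚ) ^ m ∣ f ^ m := pow_dvd_pow_of_dvd (X_dvd_iff.mpr hf) m
  exact (X_pow_dvd_iff.mp this) j h

lemma coeff_expPS {f : PowerSeries ℚ} (hf : constantCoeff f = 0) (w M : ℕ) (hM : w ≤ M) :
    coeff w (expPS f) =
      ∑ n ∈ Finset.range (M + 1), (coeff w (f ^ n)) / (Nat.factorial n : ℚ) := by
  rw [expPS, coeff_mk]
  apply Finset.sum_subset (Finset.range_subset_range.mpr (by omega))
  intro n _ hn
  rw [Finset.mem_range, not_lt] at hn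
  rw [coeff_pow_eq_zero hf (by omega), zero_div]

lemma constantCoeff_expPS (f : PowerSeries ℚ) : constantCoeff (expPS f) = 1 := by
  rw [← coeff_zero_eq_constantCoeff_apply, expPS, coeff_mk]
  simp

lemma expPS_zero : expPS 0 = 1 := by
  ext n
  simp only [expPS, coeff_mk]
  rw [Finset.sum_eq_single 0]
  · simp
  · intro b _ hb; simp [zero_pow hb]
  · simp

lemma derivative_expPS {f : PowerSeries ℚ} (hf : constantCoeff f = 0) :
    d⁄dX ℚ (expPS f) = d⁄dX ℚ f * expPS f := by
  ext w
  rw [coeff_derivative, coeff_expPS hf (w+1) (w+1) le_rfl]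
  have LHS : (∑ n ∈ range (w+2), coeff (w+1) (f^n) / (n.factorial : ℚ)) * ((w:ℚ)+1)
      = ∑ m ∈ range (w+1), coeff w (f ^ m * d⁄dX ℚ f) / (m.factorial : ℚ) := by
    rw [Finset.sum_mul, Finset.sum_range_succ']
    have h0 : coeff (w+1) (f ^ 0) = 0 := by simp
    rw [h0]
    simp only [zero_div, zero_mul, add_zero]
    apply Finset.sum_congr rfl
    intro n _
    have hD : coeff w (d⁄dX ℚ (f ^ (n+1))) = coeff (w+1) (f^(n+1)) * ((w:ℚ)+1) := by
      rw [coeff_derivative]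
    have hD2 : d⁄dX ℚ (f ^ (n+1)) = (((n+1 : ℕ)) : ℚ) • (f ^ n * d⁄dX ℚ f) := by
      rw [Derivation.leibniz_pow, Nat.add_sub_cancel, smul_eq_mul, Nat.cast_smul_eq_nsmul]
    rw [div_mul_eq_mul_div, ← hD, hD2, map_smul, smul_eq_mul, Nat.factorial_succ]
    have h1 : ((n:ℚ)+1) ≠ 0 := by positivity
    have h2 : ((n.factorial :ℚ)) ≠ 0 := by exact_mod_cast (Nat.factorial_pos n).ne'
    push_cast
    field_simp
  rw [LHS, coeff_mul]
  have : ∀ p ∈ antidiagonal w, coeff p.1 (d⁄dX ℚ f) * coeff p.2 (expPS f)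
      = ∑ m ∈ range (w+1), coeff p.1 (d⁄dX ℚ f) * coeff p.2 (f ^ m) / (m.factorial : ℚ) := by
    intro p hp
    rw [coeff_expPS hf p.2 w (by rw [Finset.HasAntidiagonal.mem_antidiagonal] at hp; omega), Finset.mul_sum]
    apply Finset.sum_congr rfl; intro m _; ring
  rw [Finset.sum_congr rfl this, Finset.sum_comm]
  apply Finset.sum_congr rfl
  intro m _
  rw [mul_comm (f ^ m) (d⁄dX ℚ f), coeff_mul, Finset.sum_div]

lemma ode_unique {u v g : PowerSeries ℚ} (hu : d⁄dX ℚ u = g * u) (hv : d⁄dX ℚ v = g * v)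
    (h0 : constantCoeff u = constantCoeff v) : u = v := by
  ext n
  induction n using Nat.strong_induction_on with
  | _ n ih =>
    match n with
    | 0 => simpa [coeff_zero_eq_constantCoeff] using h0
    | Nat.succ n =>
      have hu' := congrArg (coeff n) hu
      have hv' := congrArg (coeff n) hv
      rw [coeff_derivative, coeff_mul] at hu' hv'
      have key : coeff (n+1) u * ((n:ℚ)+1) = coeff (n+1) v * ((n:ℚ)+1) := by
        rw [hu', hv']
        apply Finset.sum_congr rfl
        intro p hp
        rw [Finset.HasAntidiagonal.mem_antidiagonal] at hp
        rw [ih p.2 (by omega)]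
      have hne : ((n:ℚ)+1) ≠ 0 := by positivity
      exact mul_right_cancel₀ hne key

lemma expPS_add {f g : PowerSeries ℚ} (hf : constantCoeff f = 0)
    (hg : constantCoeff g = 0) : expPS (f + g) = expPS f * expPS g := by
  apply ode_unique (g := d⁄dX ℚ (f + g))
  · exact derivative_expPS (by rw [map_add, hf, hg, add_zero])
  · rw [Derivation.leibniz, derivative_expPS hf, derivative_expPS hg, map_add]
    simp only [smul_eq_mul]; ring
  · rw [map_mul]; simp [constantCoeff_expPS]

lemma expPS_sum {ι : Type*} (s : Finset ι) (f : ι → PowerSeries ℚ)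
    (hf : ∀ i ∈ s, constantCoeff (f i) = 0) :
    expPS (∑ i ∈ s, f i) = ∏ i ∈ s, expPS (f i) := by
  classical
  induction s using Finset.induction_on with
  | empty => simpa using expPS_zero
  | insert a s hx ih =>
    rw [Finset.sum_insert hx, Finset.prod_insert hx,
      expPS_add (hf a (Finset.mem_insert_self a s))
        (by rw [map_sum]; exact Finset.sum_eq_zero fun i hi => hf i (Finset.mem_insert_of_mem hi)),
      ih fun i hi => hf i (Finset.mem_insert_of_mem hi)]

lemma coeff_pow_congr {f g : PowerSeries ℚ} {w : ℕ}
    (h : ∀ j ≤ w, coeff j f = coeff j g) (n : ℕ) :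
    ∀ j ≤ w, coeff j (f ^ n) = coeff j (g ^ n) := by
  induction n with
  | zero => simp
  | succ n ih =>
    intro j hj
    rw [pow_succ, pow_succ, coeff_mul, coeff_mul]
    apply Finset.sum_congr rfl
    intro p hp
    rw [Finset.HasAntidiagonal.mem_antidiagonal] at hp
    rw [ih p.1 (by omega), h p.2 (by omega)]

lemma coeff_expPS_congr {f g : PowerSeries ℚ} (w : ℕ)
    (h : ∀ j ≤ w, coeff j f = coeff j g) :
    coeff w (expPS f) = coeff w (expPS g) := by
  simp only [expPS, coeff_mk]
  exact Finset.sum_congr rfl fun n _ => by rw [coeff_pow_congr h n w le_rfl]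

lemma expPS_nsmul {f : PowerSeries ℚ} (hf : constantCoeff f = 0) (m : ℕ) :
    expPS (m • f) = expPS f ^ m := by
  induction m with
  | zero => simpa using expPS_zero
  | succ m ih =>
    rw [succ_nsmul, expPS_add (by rw [map_nsmul, hf, smul_zero]) hf, ih, pow_succ]

noncomputable def logS (d : ℕ) : PowerSeries ℚ :=
  PowerSeries.mk fun n => if d ∣ n ∧ n ≠ 0 then -1 / ((n / d : ℕ) : ℚ) else 0

lemma constantCoeff_logS (d : ℕ) : constantCoeff (logS d) = 0 := by
  rw [← coeff_zero_eq_constantCoeff_apply]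
  simp [logS]

lemma coeff_derivative_logS {d : ℕ} (hd : 1 ≤ d) (n : ℕ) :
    coeff n (d⁄dX ℚ (logS d)) = if d ∣ (n+1) then -(d:ℚ) else 0 := by
  rw [coeff_derivative, logS, coeff_mk]
  by_cases h : d ∣ (n+1)
  · rw [if_pos ⟨h, Nat.succ_ne_zero n⟩, if_pos h]
    obtain ⟨k, hk⟩ := h
    have hk0 : k ≠ 0 := by rintro rfl; omega
    rw [hk, Nat.mul_div_cancel_left k (by omega)]
    have hq : ((n:ℚ) + 1) = (d:ℚ) * k := by exact_mod_cast congrArg (Nat.cast (R := ℚ)) hk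
    have hk0' : (k:ℚ) ≠ 0 := Nat.cast_ne_zero.mpr hk0
    rw [hq]
    field_simp
  · rw [if_neg (by tauto), if_neg h, zero_mul]

lemma expPS_logS {d : ℕ} (hd : 1 ≤ d) : expPS (logS d) = 1 - X ^ d := by
  apply ode_unique (g := d⁄dX ℚ (logS d)) (derivative_expPS (constantCoeff_logS d))
  · ext n
    rw [coeff_derivative]
    have hr : coeff n (d⁄dX ℚ (logS d) * ((1 : PowerSeries ℚ) - X ^ d))
        = coeff n (d⁄dX ℚ (logS d)) -
          (if d ≤ n then coeff (n - d) (d⁄dX ℚ (logS d)) else 0) := by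
      rw [mul_sub, mul_one, map_sub, coeff_mul_X_pow']
    rw [hr, map_sub, coeff_one, coeff_X_pow, coeff_derivative_logS hd]
    rcases le_or_gt d n with h | h
    · rw [if_pos h, coeff_derivative_logS hd]
      have hiff : d ∣ (n + 1) ↔ d ∣ (n - d + 1) := by
        constructor
        · intro hdd
          have h2 : n - d + 1 = n + 1 - d := by omega
          rw [h2]
          exact Nat.dvd_sub hdd dvd_rfl
        · intro hdd
          have h2 : n + 1 = (n - d + 1) + d := by omega
          rw [h2]
          exact Nat.dvd_add hdd dvd_rfl
      rw [if_neg (by omega : ¬ (n+1 = 0)), if_neg (by omega : ¬ (n+1 = d))]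
      by_cases hdd : d ∣ (n+1)
      · rw [if_pos hdd, if_pos (hiff.mp hdd)]; ring
      · rw [if_neg hdd, if_neg (fun hc => hdd (hiff.mpr hc))]; ring
    · rw [if_neg (not_le.mpr h), sub_zero, if_neg (by omega : ¬ (n+1 = 0))]
      by_cases he : n + 1 = d
      · rw [if_pos (show d ∣ (n+1) by rw [he]), if_pos he, ← he]; push_cast; ring
      · rw [if_neg he, if_neg (fun hdd : d ∣ (n+1) => he (by
          have := Nat.le_of_dvd (by omega) hdd
          omega))]
        ring
  · rw [constantCoeff_expPS, map_sub, map_one, map_pow, constantCoeff_X,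
      zero_pow (by omega : d ≠ 0), sub_zero]

noncomputable def binS (a : ℚ) (d : ℕ) : PowerSeries ℚ :=
  PowerSeries.mk fun n => if d ∣ n then (-1 : ℚ) ^ (n / d) * genChoose a (n / d) else 0

lemma coeff_one_sub_X_pow_pow {d : ℕ} (hd : 1 ≤ d) (m w : ℕ) :
    coeff w (((1 : PowerSeries ℚ) - X ^ d) ^ m) =
      if d ∣ w then (-1 : ℚ) ^ (w / d) * (m.choose (w / d) : ℚ) else 0 := by
  have hexp : ((1 : PowerSeries ℚ) - X ^ d) ^ m
      = ∑ k ∈ range (m + 1), C ((-1 : ℚ) ^ k * (m.choose k : ℚ)) * X ^ (d * k) := by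
    rw [sub_eq_add_neg, add_comm, add_pow]
    apply Finset.sum_congr rfl
    intro k _
    rw [one_pow, mul_one, neg_pow, ← pow_mul]
    push_cast
    rw [map_mul, map_pow, map_neg, map_one, map_natCast]
    ring
  rw [hexp, map_sum]
  have hterm : ∀ k, coeff w (C ((-1 : ℚ) ^ k * (m.choose k : ℚ)) * X ^ (d * k))
      = if w = d * k then (-1 : ℚ) ^ k * (m.choose k : ℚ) else 0 := by
    intro k
    rw [coeff_C_mul, coeff_X_pow]
    split <;> simp
  simp only [hterm]
  by_cases hdw : d ∣ w
  · rw [if_pos hdw]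
    by_cases hle : w / d ≤ m
    · rw [Finset.sum_eq_single (w / d)]
      · rw [if_pos (by rw [Nat.mul_div_cancel' hdw])]
      · intro k _ hk
        rw [if_neg (fun hc => hk (by rw [hc, Nat.mul_div_cancel_left k (by omega)]))]
      · intro hc
        exact absurd (Finset.mem_range.mpr (by omega)) hc
    · rw [Nat.choose_eq_zero_of_lt (by omega), Finset.sum_eq_zero]
      · simp
      · intro k hk
        rw [Finset.mem_range] at hk
        rw [if_neg (fun hc => by
          rw [hc, Nat.mul_div_cancel_left k (by omega)] at hle; omega)]
  · rw [if_neg hdw, Finset.sum_eq_zero]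
    intro k _
    rw [if_neg (fun hc => hdw ⟨k, hc⟩)]

lemma expPS_smul_logS {d : ℕ} (hd : 1 ≤ d) (a : ℚ) :
    expPS (C a * logS d) = binS a d := by
  ext w
  set P : Polynomial ℚ := ∑ n ∈ range (w + 1),
    Polynomial.C (coeff w ((logS d) ^ n) / (n.factorial : ℚ)) * Polynomial.X ^ n with hPdef
  set Q : Polynomial ℚ := if d ∣ w then
      Polynomial.C ((-1 : ℚ) ^ (w / d) / ((w / d).factorial : ℚ)) *
        ∏ j ∈ range (w / d), (Polynomial.X - Polynomial.C (j : ℚ))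
    else 0 with hQdef
  have hP : ∀ x : ℚ, P.eval x = coeff w (expPS (C x * logS d)) := by
    intro x
    rw [expPS, coeff_mk, hPdef, Polynomial.eval_finset_sum]
    apply Finset.sum_congr rfl
    intro n _
    rw [Polynomial.eval_mul, Polynomial.eval_C, Polynomial.eval_pow, Polynomial.eval_X,
      mul_pow, ← map_pow, coeff_C_mul]
    ring
  have hQ : ∀ x : ℚ, Q.eval x = coeff w (binS x d) := by
    intro x
    rw [binS, coeff_mk, hQdef]
    by_cases hdw : d ∣ w
    · rw [if_pos hdw, if_pos hdw, Polynomial.eval_mul, Polynomial.eval_C, Polynomial.eval_prod]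
      simp only [Polynomial.eval_sub, Polynomial.eval_X, Polynomial.eval_C]
      rw [genChoose]
      field_simp
    · rw [if_neg hdw, if_neg hdw, Polynomial.eval_zero]
  have hNat : ∀ m : ℕ, P.eval ((m : ℚ)) = Q.eval ((m : ℚ)) := by
    intro m
    rw [hP, hQ]
    have e1 : C ((m : ℕ) : ℚ) * logS d = (m : ℕ) • logS d := by
      rw [nsmul_eq_mul, map_natCast]
    rw [e1, expPS_nsmul (constantCoeff_logS d) m, expPS_logS hd,
      coeff_one_sub_X_pow_pow hd, binS, coeff_mk]
    by_cases hdw : d ∣ w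
    · rw [if_pos hdw, if_pos hdw, genChoose_natCast]
    · rw [if_neg hdw, if_neg hdw]
  have hPQ : P = Q := by
    apply Polynomial.eq_of_infinite_eval_eq
    apply Set.Infinite.mono (s := Set.range (Nat.cast : ℕ → ℚ))
    · rintro x ⟨m, rfl⟩
      exact hNat m
    · exact Set.infinite_range_of_injective Nat.cast_injective
  rw [← hP a, hPQ, hQ a]

lemma moebius_inv_sum (N : ℕ → ℚ) {j : ℕ} (hj : 0 < j) :
    ∑ d ∈ j.divisors, (d : ℚ) * moebiusConv N d = N j := by
  refine (ArithmeticFunction.sum_eq_iff_sum_mul_moebius_eq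
    (f := fun i => (i : ℚ) * moebiusConv N i) (g := N)).mpr ?_ j hj
  intro n hn
  rw [moebiusConv, ← Nat.sum_divisorsAntidiagonal'
    (f := fun x y => ((ArithmeticFunction.moebius x : ℤ) : ℚ) * N y)]
  have hne : (n : ℚ) ≠ 0 := Nat.cast_ne_zero.mpr hn.ne'
  rw [← mul_assoc, mul_one_div, div_self hne, one_mul]

lemma multiset_sum_eq_sum_count (m : Multiset ℕ) :
    m.sum = ∑ a ∈ m.toFinset, m.count a * a := by
  have h := Finset.sum_multiset_map_count m id
  simp only [id_eq, smul_eq_mul] at h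
  rw [← h, Multiset.map_id']

noncomputable def divFinsupp (l : ℕ →₀ ℕ) : ℕ →₀ ℕ :=
  Finsupp.onFinset l.support (fun d => l d / d)
    (fun d h => Finsupp.mem_support_iff.mpr (fun h0 => h (by beta_reduce; rw [h0, Nat.zero_div])))

noncomputable def partOf (l : ℕ →₀ ℕ) : Multiset ℕ := Finsupp.toMultiset (divFinsupp l)

lemma count_partOf (l : ℕ →₀ ℕ) (i : ℕ) : (partOf l).count i = l i / i := by
  rw [partOf, Finsupp.count_toMultiset]
  rfl

/-- The finsupp `d ↦ d * (count of d in p)` associated to a partition. -/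
noncomputable def finsuppOf {w : ℕ} (p : Nat.Partition w) : ℕ →₀ ℕ :=
  Finsupp.onFinset p.parts.toFinset (fun d => d * p.parts.count d)
    (fun d h => by
      rw [Multiset.mem_toFinset, ← Multiset.count_ne_zero]
      intro h0
      exact h (by beta_reduce; rw [h0, mul_zero]))

lemma finsuppOf_apply {w : ℕ} (p : Nat.Partition w) (d : ℕ) :
    finsuppOf p d = d * p.parts.count d := rfl

lemma parts_toFinset_subset {w : ℕ} (p : Nat.Partition w) :
    p.parts.toFinset ⊆ Finset.Icc 1 w := by
  intro i hi
  rw [Multiset.mem_toFinset] at hi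
  obtain ⟨t, ht⟩ := Multiset.exists_cons_of_mem hi
  have hsum : p.parts.sum = w := p.parts_sum
  rw [ht, Multiset.sum_cons] at hsum
  have hpos := p.parts_pos hi
  rw [Finset.mem_Icc]
  omega

noncomputable def binProdSet (w : ℕ) : Finset (ℕ →₀ ℕ) :=
  (Finset.finsuppAntidiag (Finset.Icc 1 w) w).filter
    (fun l => ∀ d ∈ Finset.Icc 1 w, d ∣ l d)

lemma mem_binProdSet {w : ℕ} {l : ℕ →₀ ℕ} (hl : l ∈ binProdSet w) :
    (∑ d ∈ Finset.Icc 1 w, l d = w) ∧ l.support ⊆ Finset.Icc 1 w ∧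
      ∀ d ∈ Finset.Icc 1 w, d ∣ l d := by
  rw [binProdSet, Finset.mem_filter, Finset.mem_finsuppAntidiag] at hl
  exact ⟨hl.1.1, hl.1.2, hl.2⟩

lemma partOf_toFinset_subset {w : ℕ} {l : ℕ →₀ ℕ} (hl : l ∈ binProdSet w) :
    (partOf l).toFinset ⊆ Finset.Icc 1 w := by
  intro a ha
  rw [Multiset.mem_toFinset, ← Multiset.count_ne_zero, count_partOf] at ha
  have : l a ≠ 0 := fun h0 => ha (by rw [h0, Nat.zero_div])
  exact (mem_binProdSet hl).2.1 (Finsupp.mem_support_iff.mpr this)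

noncomputable def mkPart (w : ℕ) (l : ℕ →₀ ℕ) (hl : l ∈ binProdSet w) : Nat.Partition w where
  parts := partOf l
  parts_pos := by
    intro i hi
    rw [← Multiset.count_ne_zero, count_partOf] at hi
    rcases Nat.eq_zero_or_pos i with h0 | h1
    · exact absurd (by rw [h0, Nat.div_zero]) hi
    · exact h1
  parts_sum := by
    rw [multiset_sum_eq_sum_count,
      Finset.sum_subset (partOf_toFinset_subset hl) (fun d _ hd => by
        rw [Multiset.count_eq_zero_of_notMem (fun hm => hd (Multiset.mem_toFinset.mpr hm)),
          zero_mul])]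
    obtain ⟨hsum, hsupp, hdvd⟩ := mem_binProdSet hl
    calc ∑ d ∈ Finset.Icc 1 w, (partOf l).count d * d
        = ∑ d ∈ Finset.Icc 1 w, l d := by
          apply Finset.sum_congr rfl
          intro d hd
          rw [count_partOf, Nat.div_mul_cancel (hdvd d hd)]
      _ = w := hsum

lemma finsuppOf_mem_binProdSet {w : ℕ} (p : Nat.Partition w) : finsuppOf p ∈ binProdSet w := by
  rw [binProdSet, Finset.mem_filter, Finset.mem_finsuppAntidiag]
  have hsupp : (finsuppOf p).support ⊆ Finset.Icc 1 w := by
    intro d hd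
    rw [Finsupp.mem_support_iff, finsuppOf_apply] at hd
    have : p.parts.count d ≠ 0 := fun h0 => hd (by rw [h0, mul_zero])
    exact parts_toFinset_subset p (Multiset.mem_toFinset.mpr (Multiset.count_ne_zero.mp this))
  refine ⟨⟨?_, hsupp⟩, fun d _ => ⟨p.parts.count d, rfl⟩⟩
  have hsub : p.parts.toFinset ⊆ Finset.Icc 1 w := parts_toFinset_subset p
  rw [← Finset.sum_subset hsub (fun d _ hd => by
    rw [finsuppOf_apply, Multiset.count_eq_zero_of_notMem
      (fun hm => hd (Multiset.mem_toFinset.mpr hm)), mul_zero])]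
  have h3 := multiset_sum_eq_sum_count p.parts
  rw [p.parts_sum] at h3
  refine Eq.trans ?_ h3.symm
  apply Finset.sum_congr rfl
  intro d _
  rw [finsuppOf_apply, mul_comm]

lemma coeff_prod_binS (b : ℕ → ℚ) (w : ℕ) :
    coeff w (∏ d ∈ Finset.Icc 1 w, binS (b d) d) =
      ∑ p : Nat.Partition w, (-1 : ℚ) ^ (Multiset.card p.parts) *
        ∏ i ∈ p.parts.toFinset, genChoose (b i) (p.parts.count i) := by
  classical
  rw [coeff_prod]
  have hsplit : ∑ l ∈ Finset.finsuppAntidiag (Finset.Icc 1 w) w,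
      ∏ d ∈ Finset.Icc 1 w, coeff (l d) (binS (b d) d)
      = ∑ l ∈ binProdSet w, ∏ d ∈ Finset.Icc 1 w, coeff (l d) (binS (b d) d) := by
    rw [eq_comm]
    apply Finset.sum_subset (Finset.filter_subset _ _)
    intro l hl hnl
    have : ¬ ∀ d ∈ Finset.Icc 1 w, d ∣ l d := by
      intro hall
      exact hnl (Finset.mem_filter.mpr ⟨hl, hall⟩)
    push_neg at this
    obtain ⟨d, hd, hnd⟩ := this
    exact Finset.prod_eq_zero hd (by rw [binS, coeff_mk, if_neg hnd])
  rw [hsplit]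
  -- the partition-side term as a product over `Icc 1 w`
  have hRHS : ∀ p : Nat.Partition w, (-1 : ℚ) ^ (Multiset.card p.parts) *
      ∏ i ∈ p.parts.toFinset, genChoose (b i) (p.parts.count i)
      = ∏ d ∈ Finset.Icc 1 w, ((-1 : ℚ) ^ (p.parts.count d) * genChoose (b d) (p.parts.count d)) := by
    intro p
    rw [Finset.prod_mul_distrib, Finset.prod_pow_eq_pow_sum]
    congr 1
    · congr 1
      rw [Multiset.sum_count_eq_card (fun a ha => parts_toFinset_subset p (Multiset.mem_toFinset.mpr ha))]
    · rw [Finset.prod_subset (parts_toFinset_subset p) (fun d _ hd => by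
        rw [Multiset.count_eq_zero_of_notMem (fun hm => hd (Multiset.mem_toFinset.mpr hm)),
          genChoose_zero])]
  simp only [hRHS]
  refine Finset.sum_bij' (fun l hl => mkPart w l hl) (fun p _ => finsuppOf p)
    (fun l hl => Finset.mem_univ _) (fun p _ => finsuppOf_mem_binProdSet p) ?_ ?_ ?_
  · -- left inverse : finsuppOf (mkPart w l hl) = l
    intro l hl
    obtain ⟨hsum, hsupp, hdvd⟩ := mem_binProdSet (w := w) (l := l) hl
    ext d
    rw [finsuppOf_apply]
    show d * (partOf l).count d = l d
    rw [count_partOf]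
    rcases Nat.eq_zero_or_pos d with h0 | h1
    · subst h0
      have hl0 : l 0 = 0 := by
        by_contra hne
        have hin := hsupp (Finsupp.mem_support_iff.mpr hne)
        rw [Finset.mem_Icc] at hin
        omega
      rw [hl0]
    · by_cases hdI : d ∈ Finset.Icc 1 w
      · rw [Nat.mul_div_cancel' (hdvd d hdI)]
      · have hz : l d = 0 := by
          by_contra hne
          exact hdI (hsupp (Finsupp.mem_support_iff.mpr hne))
        rw [hz, Nat.zero_div, mul_zero]
  · -- right inverse : mkPart w (finsuppOf p) _ = p
    intro p _
    apply Nat.Partition.ext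
    show partOf (finsuppOf p) = p.parts
    ext i
    rw [count_partOf, finsuppOf_apply]
    rcases Nat.eq_zero_or_pos i with h0 | h1
    · rw [h0, Nat.div_zero, eq_comm, Multiset.count_eq_zero]
      intro hm
      exact absurd (p.parts_pos hm) (by omega)
    · rw [Nat.mul_div_cancel_left _ h1]
  · -- values agree
    intro l hl
    obtain ⟨hsum, hsupp, hdvd⟩ := mem_binProdSet (w := w) (l := l) hl
    apply Finset.prod_congr rfl
    intro d hd
    rw [binS, coeff_mk, if_pos (hdvd d hd)]
    show _ = (-1 : ℚ) ^ ((partOf l).count d) * genChoose (b d) ((partOf l).count d)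
    rw [count_partOf]

/-- For any sequence `N : {1,2,…} → ℚ`, in `ℚ[[t]]` one has
`exp(−Σ_{i≥1} N_i t^i/i) = Σ_{w≥0} π_w(N) t^w`; that is, for every `w ≥ 0` the coefficient of
`t^w` in `exp(−Σ_{i≥1} N_i t^i/i)` equals `π_w(N)`. -/
theorem inverse_zeta_generates_pi (N : ℕ → ℚ) :
    expPS (negLogZeta N) = PowerSeries.mk (piW N) ∧
      ∀ w : ℕ, PowerSeries.coeff w (expPS (negLogZeta N)) = piW N w := by
  have key : ∀ w : ℕ, coeff w (expPS (negLogZeta N)) = piW N w := by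
    intro w
    set b : ℕ → ℚ := moebiusConv N with hb
    have hc0 : ∀ d ∈ Finset.Icc 1 w, constantCoeff (C (b d) * logS d) = 0 := by
      intro d _
      rw [map_mul, constantCoeff_logS, mul_zero]
    have hstep1 : coeff w (expPS (negLogZeta N)) =
        coeff w (expPS (∑ d ∈ Finset.Icc 1 w, C (b d) * logS d)) := by
      apply coeff_expPS_congr
      intro j hj
      rw [map_sum]
      have hterm : ∀ d ∈ Finset.Icc 1 w, coeff j (C (b d) * logS d)
          = if d ∣ j ∧ j ≠ 0 then b d * (-1 / ((j / d : ℕ) : ℚ)) else 0 := by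
        intro d _
        rw [coeff_C_mul, logS, coeff_mk]
        split <;> simp
      rw [Finset.sum_congr rfl hterm]
      rcases Nat.eq_zero_or_pos j with h0 | h1
      · subst h0
        rw [negLogZeta, coeff_mk, if_pos rfl, eq_comm]
        apply Finset.sum_eq_zero
        intro d _
        rw [if_neg (by tauto)]
      · rw [negLogZeta, coeff_mk, if_neg (by omega)]
        have hsub : j.divisors ⊆ Finset.Icc 1 w := by
          intro d hd
          rw [Nat.mem_divisors] at hd
          have h2 := Nat.le_of_dvd h1 hd.1
          have h3 : 0 < d := Nat.pos_of_dvd_of_pos hd.1 h1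
          rw [Finset.mem_Icc]
          omega
        rw [eq_comm, ← Finset.sum_subset hsub (fun d _ hd => by
          rw [if_neg (fun hc => hd (Nat.mem_divisors.mpr ⟨hc.1, hc.2⟩))])]
        have hterm2 : ∀ d ∈ j.divisors, (if d ∣ j ∧ j ≠ 0 then b d * (-1 / ((j / d : ℕ) : ℚ)) else 0)
            = -((d : ℚ) * b d) / j := by
          intro d hd
          rw [Nat.mem_divisors] at hd
          rw [if_pos ⟨hd.1, hd.2⟩, Nat.cast_div_charZero hd.1]
          have hd0 : (d : ℚ) ≠ 0 := Nat.cast_ne_zero.mpr (Nat.pos_of_dvd_of_pos hd.1 h1).ne'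
          have hj0 : (j : ℚ) ≠ 0 := Nat.cast_ne_zero.mpr h1.ne'
          field_simp
        rw [Finset.sum_congr rfl hterm2, ← Finset.sum_div, Finset.sum_neg_distrib,
          moebius_inv_sum N h1, neg_div]
    rw [hstep1, expPS_sum _ _ hc0]
    have hstep3 : ∏ d ∈ Finset.Icc 1 w, expPS (C (b d) * logS d)
        = ∏ d ∈ Finset.Icc 1 w, binS (b d) d := by
      apply Finset.prod_congr rfl
      intro d hd
      rw [Finset.mem_Icc] at hd
      exact expPS_smul_logS hd.1 (b d)
    rw [hstep3, coeff_prod_binS, piW]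
  exact ⟨by ext w; rw [coeff_mk, key w], key⟩
end

section
/- Let n ≥ 1 and let q be a positive integer, and set N_r := q^r + q^{2r} + … + q^{nr} for r ≥ 1 (when q is a prime power this is the number of 𝔽_{q^r}-points of ℙ^n minus a rational point). With a_i := (1/i)·Σ_{d ∣ i} μ(i/d)·N_d and π_w := Σ_{λ : |λ| = w} (−1)^{ℓ(λ)} · Π_{i≥1} C(a_i, λ_i) (sum over all partitions λ of weight w), one has π_w = 0 for every w ≥ n + 1. -/
open scoped Classical

namespace PiAux

open PowerSeries

lemma genChoose_zero (a : ℚ) : genChoose a 0 = 1 := by simp [genChoose]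

lemma genChoose_succ (a : ℚ) (k : ℕ) :
    ((k : ℚ) + 1) * genChoose a (k + 1) = (a - k) * genChoose a k := by
  unfold genChoose
  rw [Finset.prod_range_succ, Nat.factorial_succ]
  push_cast
  have h1 : (Nat.factorial k : ℚ) ≠ 0 := Nat.cast_ne_zero.mpr (Nat.factorial_ne_zero k)
  have h2 : (k : ℚ) + 1 ≠ 0 := by positivity
  field_simp

/-- `X * d/dX`, the logarithmic-derivative-friendly operator. -/
noncomputable def xd (f : ℚ⟦X⟧) : ℚ⟦X⟧ := X * d⁄dX ℚ f

lemma coeff_xd (f : ℚ⟦X⟧) (m : ℕ) : coeff m (xd f) = m * coeff m f := by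
  cases m with
  | zero => simp [xd]
  | succ m =>
    rw [xd, coeff_succ_X_mul, coeff_derivative]
    push_cast; ring

lemma xd_mul (f g : ℚ⟦X⟧) : xd (f * g) = xd f * g + f * xd g := by
  unfold xd
  rw [Derivation.leibniz]
  simp only [smul_eq_mul]
  ring

lemma xd_one : xd 1 = 0 := by unfold xd; simp

lemma xd_prod {ι : Type*} (s : Finset ι) (f S : ι → ℚ⟦X⟧)
    (h : ∀ i ∈ s, xd (f i) = S i * f i) :
    xd (∏ i ∈ s, f i) = (∑ i ∈ s, S i) * ∏ i ∈ s, f i := by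
  induction s using Finset.cons_induction with
  | empty => simp [xd_one]
  | cons a s ha ih =>
    rw [Finset.prod_cons, Finset.sum_cons, xd_mul, h a (Finset.mem_cons_self a s),
      ih (fun i hi => h i (Finset.mem_cons_of_mem hi))]
    ring

/-- The binomial series `(1 - X^i)^a` for rational `a`. -/
noncomputable def bin (a : ℚ) (i : ℕ) : ℚ⟦X⟧ :=
  PowerSeries.mk fun m => if i ∣ m then (-1) ^ (m / i) * genChoose a (m / i) else 0

/-- The inverse of `1 - X^i`. -/
noncomputable def divisorInd (i : ℕ) : ℚ⟦X⟧ :=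
  PowerSeries.mk fun m => if i ∣ m then 1 else 0

/-- The inverse of `1 - cX`. -/
noncomputable def geom (c : ℚ) : ℚ⟦X⟧ := PowerSeries.mk fun m => c ^ m

lemma divisorInd_inv {i : ℕ} (hi : 0 < i) : (1 - X ^ i) * divisorInd i = 1 := by
  ext m
  rw [sub_mul, one_mul, map_sub, coeff_X_pow_mul']
  rcases Nat.eq_zero_or_pos m with rfl | hm
  · simp [divisorInd, Nat.le_zero, hi.ne']
  · rw [coeff_one, if_neg hm.ne']
    by_cases hle : i ≤ m
    · rw [if_pos hle]
      simp only [divisorInd, coeff_mk]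
      by_cases hd : i ∣ m
      · rw [if_pos hd, if_pos ((Nat.dvd_sub hd dvd_rfl)), sub_self]
      · rw [if_neg hd, if_neg (fun h => hd (by
          have := Nat.dvd_add h (dvd_refl i)
          rwa [Nat.sub_add_cancel hle] at this)), sub_self]
    · rw [if_neg hle]
      simp only [divisorInd, coeff_mk]
      rw [if_neg (fun hd => hle (Nat.le_of_dvd hm hd)), sub_zero]

lemma geom_inv (c : ℚ) : (1 - C c * X) * geom c = 1 := by
  ext m
  rw [sub_mul, one_mul, map_sub, mul_assoc, coeff_C_mul]
  cases m with
  | zero => simp [geom]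
  | succ m =>
    rw [coeff_succ_X_mul, coeff_one, if_neg (Nat.succ_ne_zero m)]
    simp only [geom, coeff_mk]
    rw [pow_succ]
    ring

lemma bin_ode (a : ℚ) {i : ℕ} (hi : 0 < i) :
    (1 - X ^ i) * xd (bin a i) = C (-(a * i)) * X ^ i * bin a i := by
  ext m
  rw [sub_mul, one_mul, map_sub, coeff_X_pow_mul', mul_assoc, coeff_C_mul, coeff_X_pow_mul']
  by_cases hle : i ≤ m
  · rw [if_pos hle, if_pos hle, coeff_xd, coeff_xd]
    simp only [bin, coeff_mk]
    by_cases hd : i ∣ m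
    · have hd' : i ∣ m - i := Nat.dvd_sub hd dvd_rfl
      rw [if_pos hd, if_pos hd']
      obtain ⟨k, hk⟩ := hd
      have hk1 : 1 ≤ k := by
        rcases Nat.eq_zero_or_pos k with rfl | h; · omega
        · exact h
      obtain ⟨k', rfl⟩ := Nat.exists_eq_add_of_le hk1
      have h1 : m / i = k' + 1 := by rw [hk]; rw [Nat.mul_div_cancel_left _ hi]; ring
      have hmeq : m = i + i * k' := by rw [hk]; ring
      have hsub : m - i = i * k' := by omega
      have h2 : (m - i) / i = k' := by rw [hsub, Nat.mul_div_cancel_left _ hi]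
      rw [h1, h2]
      have hgc := genChoose_succ a k'
      have hm : (m : ℚ) = i * (k' + 1) := by rw [hk]; push_cast; ring
      have hmi : ((m - i : ℕ) : ℚ) = i * k' := by rw [hsub]; push_cast; ring
      rw [hm, hmi]
      linear_combination (-(i : ℚ) * (-1) ^ k') * hgc
    · have hd' : ¬ i ∣ m - i := fun h => hd (by
        have := Nat.dvd_add h (dvd_refl i)
        rwa [Nat.sub_add_cancel hle] at this)
      rw [if_neg hd, if_neg hd']
      simp
  · rw [if_neg hle, if_neg hle, coeff_xd, sub_zero]
    simp only [bin, coeff_mk]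
    by_cases hd : i ∣ m
    · have : m = 0 := by
        rcases hd with ⟨k, rfl⟩
        rcases Nat.eq_zero_or_pos k with rfl | h
        · ring
        · exfalso; exact hle (Nat.le_mul_of_pos_right i h)
      rw [this]; simp
    · rw [if_neg hd]; simp

lemma xd_bin (a : ℚ) {i : ℕ} (hi : 0 < i) :
    xd (bin a i) = (C (-(a * i)) * X ^ i * divisorInd i) * bin a i := by
  have h := congrArg (fun f => divisorInd i * f) (bin_ode a hi)
  rw [← mul_assoc, mul_comm (divisorInd i), divisorInd_inv hi, one_mul] at h
  rw [h]; ring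

lemma xd_linear (c : ℚ) :
    xd (1 - C c * X) = (C (-c) * X * geom c) * (1 - C c * X) := by
  have h1 : xd (1 - C c * X) = C (-c) * X := by
    ext m
    rw [coeff_xd, map_sub, coeff_C_mul, coeff_C_mul, coeff_one, coeff_X]
    rcases m with _ | _ | m <;> norm_num
  rw [h1]
  have h2 : (C (-c) * X * geom c) * (1 - C c * X)
      = C (-c) * X * ((1 - C c * X) * geom c) := by ring
  rw [h2, geom_inv, mul_one]

lemma coeff_S (c : ℚ) {i r : ℕ} (hr : 0 < r) :
    coeff r (C c * X ^ i * divisorInd i) = if i ∣ r then c else 0 := by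
  rw [mul_assoc, coeff_C_mul, coeff_X_pow_mul']
  by_cases hle : i ≤ r
  · rw [if_pos hle]
    simp only [divisorInd, coeff_mk]
    by_cases hd : i ∣ r
    · rw [if_pos (Nat.dvd_sub hd dvd_rfl), if_pos hd, mul_one]
    · rw [if_neg (fun h => hd (by
        have := Nat.dvd_add h (dvd_refl i)
        rwa [Nat.sub_add_cancel hle] at this)), if_neg hd, mul_zero]
  · rw [if_neg hle, if_neg (fun hd => hle (Nat.le_of_dvd hr hd)), mul_zero]

lemma coeff_S_zero (c : ℚ) (i : ℕ) (hi : 0 < i) :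
    coeff 0 (C c * X ^ i * divisorInd i) = 0 := by
  rw [mul_assoc, coeff_C_mul, coeff_X_pow_mul', if_neg (by omega), mul_zero]

lemma coeff_T (c : ℚ) {r : ℕ} (hr : 0 < r) :
    coeff r (C (-c) * X * geom c) = -c ^ r := by
  obtain ⟨r', rfl⟩ := Nat.exists_eq_add_of_le hr
  rw [mul_assoc, coeff_C_mul]
  rw [show 1 + r' = r' + 1 by ring, coeff_succ_X_mul]
  simp only [geom, coeff_mk]
  rw [pow_succ]
  ring

lemma coeff_T_zero (c : ℚ) : coeff 0 (C (-c) * X * geom c) = 0 := by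
  rw [mul_assoc, coeff_C_mul, coeff_zero_X_mul, mul_zero]

lemma sum_divisors_eq (N : ℕ → ℚ) {r : ℕ} (hr : 0 < r) :
    ∑ i ∈ r.divisors, (i : ℚ) * moebiusConv N i = N r := by
  have key := (ArithmeticFunction.sum_eq_iff_sum_mul_moebius_eq
    (R := ℚ) (f := fun i => (i : ℚ) * moebiusConv N i) (g := N)).mpr ?_ r hr
  exact key
  case _ =>
    intro n hn
    rw [Nat.sum_divisorsAntidiagonal'
      (f := fun x y => ((ArithmeticFunction.moebius x : ℤ) : ℚ) * N y)]
    unfold moebiusConv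
    have hn' : (n : ℚ) ≠ 0 := Nat.cast_ne_zero.mpr hn.ne'
    field_simp

lemma coeff_eq_of_xd {A B S T : ℚ⟦X⟧} (hA : xd A = S * A) (hB : xd B = T * B)
    (h0 : coeff 0 A = coeff 0 B) (w : ℕ)
    (hST : ∀ r, 1 ≤ r → r ≤ w → coeff r S = coeff r T)
    (hS0 : coeff 0 S = 0) (hT0 : coeff 0 T = 0) :
    ∀ m, m ≤ w → coeff m A = coeff m B := by
  intro m
  induction m using Nat.strong_induction_on with
  | _ m ih =>
    intro hm
    rcases Nat.eq_zero_or_pos m with rfl | h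
    · exact h0
    · have h1 : (m : ℚ) * coeff m A = (m : ℚ) * coeff m B := by
        rw [← coeff_xd, ← coeff_xd, hA, hB, coeff_mul, coeff_mul]
        apply Finset.sum_congr rfl
        intro p hp
        replace hp := Finset.HasAntidiagonal.mem_antidiagonal.mp hp
        rcases Nat.eq_zero_or_pos p.1 with h1 | h1
        · rw [h1, hS0, hT0]; simp
        · have hp2 : p.2 < m := by omega
          rw [hST p.1 h1 (by omega), ih p.2 hp2 (by omega)]
      exact mul_left_cancel₀ (Nat.cast_ne_zero.mpr h.ne') h1

lemma multiset_sum_sum {ι : Type*} (s : Finset ι) (f : ι → Multiset ℕ) :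
    (∑ i ∈ s, f i).sum = ∑ i ∈ s, (f i).sum := by
  induction s using Finset.cons_induction <;> simp [*]

lemma parts_subset {w : ℕ} (p : Nat.Partition w) : p.parts.toFinset ⊆ Finset.Icc 1 w := by
  intro i hi
  rw [Multiset.mem_toFinset] at hi
  rw [Finset.mem_Icc]
  refine ⟨p.parts_pos hi, ?_⟩
  have := Multiset.single_le_sum (fun x _ => Nat.zero_le x) i hi
  rwa [p.parts_sum] at this

/-- The finsupp associated to a partition. -/
noncomputable def toL {w : ℕ} (p : Nat.Partition w) : ℕ →₀ ℕ :=
  ⟨p.parts.toFinset, fun i => i * p.parts.count i, by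
    intro i
    rw [Multiset.mem_toFinset]
    constructor
    · intro hi
      exact Nat.mul_ne_zero (p.parts_pos hi).ne' (Multiset.count_ne_zero.mpr hi)
    · intro h
      have h' : i * p.parts.count i ≠ 0 := h
      have : p.parts.count i ≠ 0 := fun hc => h' (by rw [hc, mul_zero])
      exact Multiset.count_ne_zero.mp this⟩

lemma toL_apply {w : ℕ} (p : Nat.Partition w) (i : ℕ) : toL p i = i * p.parts.count i := rfl

noncomputable def fromParts (w : ℕ) (l : ℕ →₀ ℕ) : Multiset ℕ :=
  ∑ i ∈ Finset.Icc 1 w, Multiset.replicate (l i / i) i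

lemma count_fromParts (w : ℕ) (l : ℕ →₀ ℕ) (j : ℕ) :
    (fromParts w l).count j = if j ∈ Finset.Icc 1 w then l j / j else 0 := by
  rw [fromParts, Multiset.count_sum']
  rw [Finset.sum_congr rfl (fun i _ => Multiset.count_replicate j i (l i / i))]
  exact Finset.sum_ite_eq' (Finset.Icc 1 w) j (fun i => l i / i)

lemma coeff_prod_bin (a : ℕ → ℚ) {w : ℕ} (hw : 1 ≤ w) :
    (∑ p : Nat.Partition w, (-1:ℚ) ^ (Multiset.card p.parts) *
      ∏ i ∈ p.parts.toFinset, genChoose (a i) (p.parts.count i)) =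
    coeff w (∏ i ∈ Finset.Icc 1 w, bin (a i) i) := by
  letI instD : DecidablePred (fun l : ℕ →₀ ℕ => ∀ i ∈ Finset.Icc 1 w, i ∣ l i) :=
    fun _ => Finset.decidableDforallFinset
  rw [PowerSeries.coeff_prod]
  have hstep : ∑ l ∈ (Finset.finsuppAntidiag (Finset.Icc 1 w) w).filter
        (fun l => ∀ i ∈ Finset.Icc 1 w, i ∣ l i),
        (∏ i ∈ Finset.Icc 1 w, coeff (l i) (bin (a i) i))
      = ∑ l ∈ Finset.finsuppAntidiag (Finset.Icc 1 w) w,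
        ∏ i ∈ Finset.Icc 1 w, coeff (l i) (bin (a i) i) :=
    Finset.sum_filter_of_ne (fun l _ hne i hi => by
      by_contra hd
      exact hne (Finset.prod_eq_zero hi (by simp [bin, coeff_mk, hd])))
  rw [← hstep]
  refine Finset.sum_bij' (fun p _ => toL p)
    (fun l hl => ⟨fromParts w l, ?_, ?_⟩) ?_ (fun l hl => Finset.mem_univ _) ?_ ?_ ?_
  -- parts_pos
  · intro j hj
    rw [fromParts, Multiset.mem_sum] at hj
    obtain ⟨i, hi, hji⟩ := hj
    rw [Multiset.eq_of_mem_replicate hji]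
    exact (Finset.mem_Icc.mp hi).1
  -- parts_sum
  · obtain ⟨hl1, hdvd⟩ := Finset.mem_filter.mp hl
    obtain ⟨hsum, _⟩ := Finset.mem_finsuppAntidiag.mp hl1
    rw [fromParts, multiset_sum_sum]
    calc ∑ i ∈ Finset.Icc 1 w, (Multiset.replicate (l i / i) i).sum
        = ∑ i ∈ Finset.Icc 1 w, l i := by
          refine Finset.sum_congr rfl fun i hi => ?_
          rw [Multiset.sum_replicate, smul_eq_mul, Nat.div_mul_cancel (hdvd i hi)]
      _ = w := hsum
  -- membership of toL p
  · intro p _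
    refine Finset.mem_filter.mpr ⟨Finset.mem_finsuppAntidiag.mpr ⟨?_, ?_⟩, ?_⟩
    · rw [← Finset.sum_subset (parts_subset p) (fun i _ hni => by
        rw [toL_apply,
          Multiset.count_eq_zero_of_notMem (fun h => hni (Multiset.mem_toFinset.mpr h)),
          mul_zero])]
      calc ∑ i ∈ p.parts.toFinset, toL p i
          = ∑ i ∈ p.parts.toFinset, p.parts.count i • i := by
            refine Finset.sum_congr rfl fun i _ => ?_
            rw [toL_apply, smul_eq_mul, mul_comm]
        _ = w := by
            rw [← Finset.sum_multiset_count, p.parts_sum]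
    · exact parts_subset p
    · intro i _
      rw [toL_apply]
      exact dvd_mul_right i _
  -- left inverse
  · intro p _
    apply Nat.Partition.ext
    ext j
    show (fromParts w (toL p)).count j = _
    rw [count_fromParts]
    by_cases hj : j ∈ Finset.Icc 1 w
    · rw [if_pos hj, toL_apply]
      have hj1 : 0 < j := (Finset.mem_Icc.mp hj).1
      rw [Nat.mul_div_cancel_left _ hj1]
    · rw [if_neg hj]
      rcases Multiset.count_eq_zero.mpr
        (fun h => hj (parts_subset p (Multiset.mem_toFinset.mpr h))) with h
      rw [h]
  -- right inverse
  · intro l hl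
    obtain ⟨hl1, hdvd⟩ := Finset.mem_filter.mp hl
    obtain ⟨_, hsupp⟩ := Finset.mem_finsuppAntidiag.mp hl1
    apply Finsupp.ext
    intro j
    rw [toL_apply]
    show j * (fromParts w l).count j = l j
    rw [count_fromParts]
    by_cases hj : j ∈ Finset.Icc 1 w
    · rw [if_pos hj, Nat.mul_div_cancel' (hdvd j hj)]
    · rw [if_neg hj, mul_zero]
      exact (Finsupp.notMem_support_iff.mp (fun h => hj (hsupp h))).symm
  -- value equality
  · intro p _
    have hcoeff : ∀ i ∈ Finset.Icc 1 w,
        coeff (toL p i) (bin (a i) i)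
          = (-1:ℚ) ^ (p.parts.count i) * genChoose (a i) (p.parts.count i) := by
      intro i hi
      have hi1 : 0 < i := (Finset.mem_Icc.mp hi).1
      rw [toL_apply, bin, coeff_mk, if_pos (dvd_mul_right i _), Nat.mul_div_cancel_left _ hi1]
    rw [Finset.prod_congr rfl hcoeff, Finset.prod_mul_distrib, Finset.prod_pow_eq_pow_sum]
    congr 1
    · congr 1
      exact (Multiset.sum_count_eq_card
        (fun x hx => parts_subset p (Multiset.mem_toFinset.mpr hx))).symm
    · apply Finset.prod_subset (parts_subset p)
      intro i _ hni
      rw [Multiset.count_eq_zero_of_notMem (fun h => hni (Multiset.mem_toFinset.mpr h)),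
        genChoose_zero]

lemma coeff_zero_bin (a : ℚ) (i : ℕ) : coeff 0 (bin a i) = 1 := by
  simp [bin, genChoose_zero]

lemma coeff_prod_linear (s : Finset ℕ) (c : ℕ → ℚ) :
    ∀ m, s.card < m → coeff m (∏ j ∈ s, (1 - C (c j) * X)) = 0 := by
  induction s using Finset.cons_induction with
  | empty =>
    intro m hm
    rw [Finset.prod_empty, coeff_one, if_neg (by omega)]
  | cons a s ha ih =>
    intro m hm
    rw [Finset.card_cons] at hm
    rw [Finset.prod_cons, sub_mul, one_mul, map_sub, mul_assoc, coeff_C_mul]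
    obtain ⟨m', rfl⟩ : ∃ m', m = m' + 1 := ⟨m - 1, by omega⟩
    rw [coeff_succ_X_mul, ih _ (by omega), ih _ (by omega), mul_zero, sub_zero]


theorem main (n : ℕ) (q : ℕ)
    (N : ℕ → ℚ)
    (hN : ∀ r : ℕ, 1 ≤ r → N r = ∑ j ∈ Finset.Icc 1 n, (q : ℚ) ^ (j * r))
    (w : ℕ) (hw : n + 1 ≤ w) :
    piW N w = 0 := by
  have hw1 : 1 ≤ w := by omega
  set a : ℕ → ℚ := moebiusConv N with ha
  set A : ℚ⟦X⟧ := ∏ i ∈ Finset.Icc 1 w, bin (a i) i with hAdef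
  set S : ℚ⟦X⟧ := ∑ i ∈ Finset.Icc 1 w, (C (-(a i * i)) * X ^ i * divisorInd i) with hSdef
  set B : ℚ⟦X⟧ := ∏ j ∈ Finset.Icc 1 n, (1 - C ((q : ℚ) ^ j) * X) with hBdef
  set T : ℚ⟦X⟧ := ∑ j ∈ Finset.Icc 1 n, (C (-((q : ℚ) ^ j)) * X * geom ((q : ℚ) ^ j))
    with hTdef
  have hA : xd A = S * A := by
    rw [hAdef, hSdef]
    exact xd_prod _ _ _ (fun i hi => xd_bin (a i) (Finset.mem_Icc.mp hi).1)
  have hB : xd B = T * B := by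
    rw [hBdef, hTdef]
    exact xd_prod _ _ _ (fun j _ => xd_linear ((q : ℚ) ^ j))
  have h0A : coeff 0 A = 1 := by
    rw [hAdef, coeff_zero_eq_constantCoeff, map_prod]
    refine Finset.prod_eq_one fun i _ => ?_
    rw [← coeff_zero_eq_constantCoeff]
    exact coeff_zero_bin (a i) i
  have h0B : coeff 0 B = 1 := by
    rw [hBdef, coeff_zero_eq_constantCoeff, map_prod]
    refine Finset.prod_eq_one fun j _ => ?_
    simp
  have hS0 : coeff 0 S = 0 := by
    rw [hSdef, map_sum]
    exact Finset.sum_eq_zero fun i hi => coeff_S_zero _ i (Finset.mem_Icc.mp hi).1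
  have hT0 : coeff 0 T = 0 := by
    rw [hTdef, map_sum]
    exact Finset.sum_eq_zero fun j _ => coeff_T_zero _
  have hS : ∀ r, 1 ≤ r → r ≤ w → coeff r S = - N r := by
    intro r h1 h2
    have hr : 0 < r := h1
    have hdiveq : (Finset.Icc 1 w).filter (· ∣ r) = r.divisors := by
      ext i
      simp only [Finset.mem_filter, Finset.mem_Icc, Nat.mem_divisors]
      constructor
      · rintro ⟨⟨_, _⟩, hd⟩; exact ⟨hd, hr.ne'⟩
      · rintro ⟨hd, _⟩
        exact ⟨⟨Nat.pos_of_dvd_of_pos hd hr, le_trans (Nat.le_of_dvd hr hd) h2⟩, hd⟩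
    calc coeff r S
        = ∑ i ∈ Finset.Icc 1 w, if i ∣ r then -(a i * i) else 0 := by
          rw [hSdef, map_sum]
          exact Finset.sum_congr rfl (fun i _ => coeff_S (-(a i * i)) hr)
      _ = ∑ i ∈ (Finset.Icc 1 w).filter (· ∣ r), -(a i * i) := (Finset.sum_filter _ _).symm
      _ = ∑ i ∈ r.divisors, -(a i * i) := by rw [hdiveq]
      _ = -∑ i ∈ r.divisors, (i : ℚ) * a i := by
          rw [← Finset.sum_neg_distrib]
          exact Finset.sum_congr rfl fun i _ => by ring
      _ = - N r := by rw [sum_divisors_eq N hr]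
  have hT : ∀ r, 1 ≤ r → coeff r T = - N r := by
    intro r h1
    have hr : 0 < r := h1
    rw [hTdef, map_sum, Finset.sum_congr rfl (fun j _ => coeff_T ((q : ℚ) ^ j) hr),
      hN r h1, ← Finset.sum_neg_distrib]
    exact Finset.sum_congr rfl fun j _ => by rw [pow_mul]
  have hmain := coeff_eq_of_xd hA hB (by rw [h0A, h0B]) w
    (fun r h1 h2 => by rw [hS r h1 h2, hT r h1]) hS0 hT0 w le_rfl
  have hpiW : piW N w = coeff w A := by
    rw [hAdef]
    exact coeff_prod_bin a hw1
  have hB0 : coeff w B = 0 := by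
    rw [hBdef]
    exact coeff_prod_linear _ _ w (by rw [Nat.card_Icc]; omega)
  rw [hpiW, hmain, hB0]

end PiAux

/-- For `n ≥ 1`, a positive integer `q`, and
`N r = q^r + q^{2r} + ⋯ + q^{nr}` (the point count of `ℙ^n` minus a rational point over
`𝔽_{q^r}` when `q` is a prime power), one has `π_w = 0` for every `w ≥ n + 1`. -/
theorem pi_projective_space_minus_point_vanishes (n : ℕ) (hn : 1 ≤ n) (q : ℕ) (hq : 1 ≤ q)
    (N : ℕ → ℚ)
    (hN : ∀ r : ℕ, 1 ≤ r → N r = ∑ j ∈ Finset.Icc 1 n, (q : ℚ) ^ (j * r))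
    (w : ℕ) (hw : n + 1 ≤ w) :
    piW N w = 0 :=
  PiAux.main n q N hN w hw
end

section
/- Let q be a prime power, let e₁, e₂, e₃ be the standard basis of 𝔽_q³, and fix α ∈ 𝔽_{q²} with α ∉ 𝔽_q. In 𝔽_{q²}³ let U = {(x,y,z) : x + α·y = 0} and W = {(x,y,z) : x + α^q·y = 0}. The subgroup of PGL₃(𝔽_q) = GL₃(𝔽_q)/scalars consisting of classes of matrices g ∈ GL₃(𝔽_q) such that g·span(e₃) = span(e₃) in 𝔽_q³ and, regarding g as a matrix over 𝔽_{q²}, {g·U, g·W} = {U, W}, has cardinality 2(q⁴ − q²). -/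
open scoped Classical

namespace Stab9

variable {q : ℕ} {F K : Type} [Field F] [Fintype F] [Field K] [Fintype K] [Algebra F K]



lemma charP_of_card (hq : IsPrimePow q) (hK : Fintype.card K = q ^ 2) :
    ∃ p k : ℕ, Nat.Prime p ∧ 0 < k ∧ p ^ k = q ∧ CharP K p := by
  obtain ⟨p, k, hp, hk, rfl⟩ := hq
  have hp' : Nat.Prime p := Nat.prime_iff.mpr hp
  have hchar : CharP K (ringChar K) := ringChar.charP K
  have hrp : Nat.Prime (ringChar K) := CharP.char_is_prime K (ringChar K)
  obtain ⟨n, hn, hcard⟩ := FiniteField.card K (ringChar K)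
  rw [hK, ← pow_mul] at hcard
  have hdvd : ringChar K ∣ p ^ (k * 2) := by
    rw [hcard]
    exact dvd_pow_self _ (by positivity)
  have : ringChar K = p := ((Nat.prime_dvd_prime_iff_eq hrp hp').mp (hrp.dvd_of_dvd_pow hdvd))
  rw [this] at hchar
  exact ⟨p, k, hp', hk, rfl, hchar⟩

lemma frob_add (hq : IsPrimePow q) (hK : Fintype.card K = q ^ 2) (x y : K) :
    (x + y) ^ q = x ^ q + y ^ q := by
  obtain ⟨p, k, hp, hk, rfl, hchar⟩ := charP_of_card hq hK
  haveI : Fact (Nat.Prime p) := ⟨hp⟩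
  exact add_pow_char_pow x y p k

lemma frob_algebraMap (hF : Fintype.card F = q) (a : F) :
    (algebraMap F K a) ^ q = algebraMap F K a := by
  rw [← map_pow, ← hF, FiniteField.pow_card]

lemma pow_q_q (hK : Fintype.card K = q ^ 2) (x : K) : (x ^ q) ^ q = x := by
  rw [← pow_mul, ← sq, ← hK, FiniteField.pow_card]

/-- independence of 1 and an element outside the base field -/
lemma indep {β : K} (hβ : β ∉ Set.range (algebraMap F K)) {x y : F}
    (h : algebraMap F K x + β * algebraMap F K y = 0) : x = 0 ∧ y = 0 := by
  by_cases hy : y = 0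
  · subst hy
    simp only [map_zero, mul_zero, add_zero] at h
    exact ⟨(algebraMap F K).injective.eq_iff.mp (by simpa using h), rfl⟩
  · exfalso
    apply hβ
    refine ⟨-x / y, ?_⟩
    have hy' : algebraMap F K y ≠ 0 := by
      simpa using fun h => hy ((algebraMap F K).injective.eq_iff.mp (by simpa using h))
    rw [map_div₀, map_neg, div_eq_iff hy']
    linear_combination -h

lemma pow_q_notMem (hq : IsPrimePow q) (hF : Fintype.card F = q) (hK : Fintype.card K = q ^ 2)
    {α : K} (hα : α ∉ Set.range (algebraMap F K)) : α ^ q ∉ Set.range (algebraMap F K) := by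
  rintro ⟨a, ha⟩
  apply hα
  refine ⟨a, ?_⟩
  have := congrArg (· ^ q) ha
  rw [frob_algebraMap hF, pow_q_q hK] at this
  exact this

lemma pow_q_ne (hq : IsPrimePow q) (hF : Fintype.card F = q) (hK : Fintype.card K = q ^ 2)
    {α : K} (hα : α ∉ Set.range (algebraMap F K)) : α ^ q ≠ α := by
  intro h
  -- all elements of range φ ∪ {α} are roots of X^q - X
  have h2 : 2 ≤ q := hq.two_le
  classical
  set f : Polynomial K := Polynomial.X ^ q - Polynomial.X with hf
  have hdeg : f.natDegree = q := by
    rw [hf]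
    rw [Polynomial.natDegree_sub_eq_left_of_natDegree_lt] <;>
      simp [Polynomial.natDegree_X_pow] <;> omega
  have hfne : f ≠ 0 := by
    intro h0
    rw [h0] at hdeg
    simp at hdeg
    omega
  set Z : Finset K := insert α (Finset.univ.image (algebraMap F K)) with hZ
  have hsub : Z.val ⊆ f.roots := by
    intro x hx
    simp only [Finset.mem_val] at hx
    rw [Polynomial.mem_roots hfne]
    have hroot : x ^ q = x := by
      rw [hZ] at hx
      rcases Finset.mem_insert.mp hx with rfl | hx
      · exact h
      · obtain ⟨a, _, rfl⟩ := Finset.mem_image.mp hx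
        exact frob_algebraMap hF a
    simp [hf, Polynomial.IsRoot, sub_eq_zero, hroot]
  have hcard : Z.card = q + 1 := by
    rw [hZ, Finset.card_insert_of_notMem, Finset.card_image_of_injective _
      (algebraMap F K).injective, Finset.card_univ, hF]
    intro hmem
    obtain ⟨a, _, ha⟩ := Finset.mem_image.mp hmem
    exact hα ⟨a, ha⟩
  have := Polynomial.card_le_degree_of_subset_roots hsub
  omega




/-- the functional x + β y on K³ -/
noncomputable def ψ (β : K) : (Fin 3 → K) →ₗ[K] K :=
  (LinearMap.proj 0 : (Fin 3 → K) →ₗ[K] K) + β • (LinearMap.proj 1 : (Fin 3 → K) →ₗ[K] K)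

lemma mem_ker_ψ {β : K} {x : Fin 3 → K} : x ∈ LinearMap.ker (ψ β) ↔ x 0 + β * x 1 = 0 := by
  simp [ψ, LinearMap.mem_ker, smul_eq_mul]

lemma finrank_ker_ψ (β : K) : Module.finrank K (LinearMap.ker (ψ β)) = 2 := by
  have hsurj : Function.Surjective (ψ β) := by
    intro k
    refine ⟨Pi.single 0 k, ?_⟩
    simp [ψ]
  have h1 : Module.finrank K (LinearMap.range (ψ β)) = 1 := by
    rw [LinearMap.range_eq_top.mpr hsurj, finrank_top, Module.finrank_self]
  have := LinearMap.finrank_range_add_finrank_ker (ψ β)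
  rw [h1] at this
  have h3 : Module.finrank K (Fin 3 → K) = 3 := by simp
  omega

lemma map_ker_le_iff (M : Matrix (Fin 3) (Fin 3) K) (hM0 : M 0 2 = 0) (hM1 : M 1 2 = 0)
    (γ β : K) :
    Submodule.map (Matrix.toLin' M) (LinearMap.ker (ψ γ)) ≤ LinearMap.ker (ψ β) ↔
      M 0 1 + β * M 1 1 = γ * (M 0 0 + β * M 1 0) := by
  constructor
  · intro h
    have hv : (![-γ, 1, 0] : Fin 3 → K) ∈ LinearMap.ker (ψ γ) := by
      rw [mem_ker_ψ]; simp
    have := h (Submodule.mem_map_of_mem hv)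
    rw [mem_ker_ψ, Matrix.toLin'_apply] at this
    simp [Matrix.mulVec, dotProduct, Fin.sum_univ_three] at this
    linear_combination this
  · rintro hcond x ⟨y, hy, rfl⟩
    rw [SetLike.mem_coe, mem_ker_ψ] at hy
    rw [mem_ker_ψ]
    rw [Matrix.toLin'_apply]
    simp only [Matrix.mulVec, dotProduct, Fin.sum_univ_three, hM0, hM1]
    ring_nf
    linear_combination (y 1) * hcond + (M 0 0 + β * M 1 0) * hy

lemma map_ker_eq_iff (u : (Matrix (Fin 3) (Fin 3) K)ˣ) (hM0 : u.val 0 2 = 0)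
    (hM1 : u.val 1 2 = 0) (γ β : K) :
    Submodule.map (Matrix.toLin' u.val) (LinearMap.ker (ψ γ)) = LinearMap.ker (ψ β) ↔
      u.val 0 1 + β * u.val 1 1 = γ * (u.val 0 0 + β * u.val 1 0) := by
  rw [← map_ker_le_iff u.val hM0 hM1 γ β]
  constructor
  · exact le_of_eq
  · intro hle
    refine Submodule.eq_of_le_of_finrank_le hle ?_
    have : Module.finrank K (Submodule.map (Matrix.toLin' u.val) (LinearMap.ker (ψ γ))) =
        Module.finrank K (LinearMap.ker (ψ γ)) := by
      have h2 : Matrix.toLin' u.val =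
          ((Matrix.GeneralLinearGroup.toLin u).toLinearEquiv : (Fin 3 → K) →ₗ[K] (Fin 3 → K)) := by
        ext v i
        rfl
      rw [h2]
      exact LinearEquiv.finrank_map_eq _ _
    rw [this, finrank_ker_ψ, finrank_ker_ψ]




lemma finrank_FK (hq : IsPrimePow q) (hF : Fintype.card F = q) (hK : Fintype.card K = q ^ 2) :
    Module.finrank F K = 2 := by
  have := Module.card_eq_pow_finrank (K := F) (V := K)
  rw [hF, hK] at this
  exact (Nat.pow_right_injective hq.two_le this.symm)

/-- the basis (β, 1) of K over F, for β outside F -/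
noncomputable def basisβ (hq : IsPrimePow q) (hF : Fintype.card F = q)
    (hK : Fintype.card K = q ^ 2) {β : K} (hβ : β ∉ Set.range (algebraMap F K)) :
    Module.Basis (Fin 2) F K := by
  refine basisOfLinearIndependentOfCardEqFinrank (b := ![β, 1]) ?_ ?_
  · rw [linearIndependent_fin2]
    refine ⟨by simp, fun a ha => hβ ⟨a, ?_⟩⟩
    simp only [Matrix.cons_val_one, Matrix.head_cons, smul_eq_mul, mul_one,
      Matrix.cons_val_zero] at ha
    rw [← ha, Algebra.smul_def, mul_one]
  · rw [finrank_FK hq hF hK]; simp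

lemma basisβ_repr (hq : IsPrimePow q) (hF : Fintype.card F = q)
    (hK : Fintype.card K = q ^ 2) {β : K} (hβ : β ∉ Set.range (algebraMap F K)) (x y : F) :
    (basisβ hq hF hK hβ).repr (algebraMap F K x + β * algebraMap F K y) =
      Finsupp.single 0 y + Finsupp.single 1 x := by
  have h0 : (basisβ hq hF hK hβ) 0 = β := by
    simp [basisβ, coe_basisOfLinearIndependentOfCardEqFinrank]
  have h1 : (basisβ hq hF hK hβ) 1 = (1 : K) := by
    simp [basisβ, coe_basisOfLinearIndependentOfCardEqFinrank]
  have hx : algebraMap F K x + β * algebraMap F K y =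
      y • (basisβ hq hF hK hβ) 0 + x • (basisβ hq hF hK hβ) 1 := by
    rw [h0, h1, Algebra.smul_def, Algebra.smul_def, mul_one]
    ring
  rw [hx]
  simp only [map_add, map_smul, Module.Basis.repr_self]
  ext i
  simp [Finsupp.smul_single]

/-- recomposition: φ(repr 1) + β φ(repr 0) = λ. -/
lemma basisβ_recompose (hq : IsPrimePow q) (hF : Fintype.card F = q)
    (hK : Fintype.card K = q ^ 2) {β : K} (hβ : β ∉ Set.range (algebraMap F K)) (lam : K) :
    algebraMap F K ((basisβ hq hF hK hβ).repr lam 1) +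
      β * algebraMap F K ((basisβ hq hF hK hβ).repr lam 0) = lam := by
  set B := basisβ hq hF hK hβ
  have h0 : B 0 = β := by
    simp [B, basisβ, coe_basisOfLinearIndependentOfCardEqFinrank]
  have h1 : B 1 = (1 : K) := by
    simp [B, basisβ, coe_basisOfLinearIndependentOfCardEqFinrank]
  have := B.sum_repr lam
  rw [Fin.sum_univ_two, h0, h1, Algebra.smul_def, Algebra.smul_def, mul_one] at this
  linear_combination this



def condM {K : Type} [Field K] (M : Matrix (Fin 3) (Fin 3) K) (γ β : K) : Prop :=
  M 0 1 + β * M 1 1 = γ * (M 0 0 + β * M 1 0)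

lemma condM_frob (hq : IsPrimePow q) (hF : Fintype.card F = q) (hK : Fintype.card K = q ^ 2)
    (g : Matrix (Fin 3) (Fin 3) F) {γ β : K}
    (h : condM (g.map (algebraMap F K)) γ β) :
    condM (g.map (algebraMap F K)) (γ ^ q) (β ^ q) := by
  unfold condM at h ⊢
  simp only [Matrix.map_apply] at h ⊢
  have := congrArg (· ^ q) h
  rw [frob_add hq hK, mul_pow, mul_pow, frob_add hq hK, mul_pow,
    frob_algebraMap hF, frob_algebraMap hF, frob_algebraMap hF, frob_algebraMap hF] at this
  exact this

lemma condM_disjoint (hq : IsPrimePow q) (hF : Fintype.card F = q) (hK : Fintype.card K = q ^ 2)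
    {α : K} (hα : α ∉ Set.range (algebraMap F K)) (g : GL (Fin 3) F)
    (h02 : (g : Matrix (Fin 3) (Fin 3) F) 0 2 = 0)
    (h1 : condM ((g : Matrix (Fin 3) (Fin 3) F).map (algebraMap F K)) α α)
    (h2 : condM ((g : Matrix (Fin 3) (Fin 3) F).map (algebraMap F K)) α (α ^ q)) : False := by
  have hne : α ^ q - α ≠ 0 := sub_ne_zero.mpr (pow_q_ne hq hF hK hα)
  set M := (g : Matrix (Fin 3) (Fin 3) F).map (algebraMap F K) with hM
  unfold condM at h1 h2
  -- subtract: (α^q - α) * M11 = α (α^q - α) M10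
  have hsub : M 1 1 - α * M 1 0 = 0 := by
    have h3 : (α ^ q - α) * (M 1 1 - α * M 1 0) = 0 := by linear_combination h2 - h1
    rcases mul_eq_zero.mp h3 with h | h
    · exact absurd h hne
    · linear_combination h
  have h10' : (g : Matrix (Fin 3) (Fin 3) F) 1 1 = 0 ∧ -(g : Matrix (Fin 3) (Fin 3) F) 1 0 = 0 := by
    refine indep hα ?_
    have : M 1 1 + α * (-(M 1 0)) = 0 := by linear_combination hsub
    simpa [hM, Matrix.map_apply] using this
  have h10 : (g : Matrix (Fin 3) (Fin 3) F) 1 1 = 0 ∧ (g : Matrix (Fin 3) (Fin 3) F) 1 0 = 0 :=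
    ⟨h10'.1, neg_eq_zero.mp h10'.2⟩
  have h01' : (g : Matrix (Fin 3) (Fin 3) F) 0 1 = 0 ∧ -(g : Matrix (Fin 3) (Fin 3) F) 0 0 = 0 := by
    refine indep hα ?_
    have : M 0 1 + α * (-(M 0 0)) = 0 := by
      have hM11 : M 1 1 = 0 := by simp [hM, Matrix.map_apply, h10.1]
      have hM10 : M 1 0 = 0 := by simp [hM, Matrix.map_apply, h10.2]
      rw [hM11, hM10] at h1
      linear_combination h1
    simpa [hM, Matrix.map_apply] using this
  have h01 : (g : Matrix (Fin 3) (Fin 3) F) 0 1 = 0 ∧ (g : Matrix (Fin 3) (Fin 3) F) 0 0 = 0 :=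
    ⟨h01'.1, neg_eq_zero.mp h01'.2⟩
  -- row 0 of g is zero, contradiction with invertibility
  have hdet : (g : Matrix (Fin 3) (Fin 3) F).det ≠ 0 :=
    (Matrix.isUnit_iff_isUnit_det _).mp g.isUnit |>.ne_zero
  apply hdet
  rw [Matrix.det_fin_three, h01.1, h01.2, h02]
  ring

lemma span_iff (g : GL (Fin 3) F) :
    Submodule.map (Matrix.toLin' (g : Matrix (Fin 3) (Fin 3) F))
        (Submodule.span F {(Pi.single 2 1 : Fin 3 → F)}) =
      Submodule.span F {(Pi.single 2 1 : Fin 3 → F)} ↔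
    (g : Matrix (Fin 3) (Fin 3) F) 0 2 = 0 ∧ (g : Matrix (Fin 3) (Fin 3) F) 1 2 = 0 := by
  constructor
  · intro h
    have hmem := Submodule.mem_map_of_mem (f := Matrix.toLin' (g : Matrix (Fin 3) (Fin 3) F))
      (Submodule.mem_span_singleton_self (Pi.single 2 1 : Fin 3 → F))
    rw [h, Submodule.mem_span_singleton] at hmem
    obtain ⟨c, hc⟩ := hmem
    have hc0 := congrFun hc 0
    have hc1 := congrFun hc 1
    simp [Matrix.toLin'_apply, Matrix.mulVec_single, Pi.single_apply] at hc0 hc1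
    exact ⟨hc0.symm, hc1.symm⟩
  · rintro ⟨h02, h12⟩
    have hdet : (g : Matrix (Fin 3) (Fin 3) F).det ≠ 0 :=
      (Matrix.isUnit_iff_isUnit_det _).mp g.isUnit |>.ne_zero
    have h22 : (g : Matrix (Fin 3) (Fin 3) F) 2 2 ≠ 0 := by
      intro h
      apply hdet
      rw [Matrix.det_fin_three, h02, h12, h]
      ring
    rw [Submodule.map_span, Set.image_singleton]
    have hcol : Matrix.toLin' (g : Matrix (Fin 3) (Fin 3) F) (Pi.single 2 1) =
        (g : Matrix (Fin 3) (Fin 3) F) 2 2 • (Pi.single 2 1 : Fin 3 → F) := by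
      funext i
      fin_cases i <;>
        simp [Matrix.toLin'_apply, Matrix.mulVec_single, Pi.single_apply, h02, h12]
    rw [hcol]
    exact Submodule.span_singleton_smul_eq (isUnit_iff_ne_zero.mpr h22) _

def Pfull (q : ℕ) {F K : Type} [Field F] [Fintype F] [Field K] [Fintype K] [Algebra F K]
    (α : K) (g : GL (Fin 3) F) : Prop :=
  Submodule.map (Matrix.toLin' (g : Matrix (Fin 3) (Fin 3) F))
      (Submodule.span F {(Pi.single 2 1 : Fin 3 → F)}) =
    Submodule.span F {(Pi.single 2 1 : Fin 3 → F)} ∧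
  ({Submodule.map (Matrix.toLin' ((g : Matrix (Fin 3) (Fin 3) F).map (algebraMap F K)))
        (LinearMap.ker (ψ α)),
    Submodule.map (Matrix.toLin' ((g : Matrix (Fin 3) (Fin 3) F).map (algebraMap F K)))
        (LinearMap.ker (ψ (α ^ q)))} : Set (Submodule K (Fin 3 → K))) =
    {LinearMap.ker (ψ α), LinearMap.ker (ψ (α ^ q))}

noncomputable def MK {F : Type} (K : Type) [Field F] [Fintype F] [Field K] [Fintype K] [Algebra F K]
    (g : GL (Fin 3) F) : (Matrix (Fin 3) (Fin 3) K)ˣ :=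
  Units.map (RingHom.mapMatrix (algebraMap F K)).toMonoidHom g

lemma MK_val (g : GL (Fin 3) F) :
    ((MK K g).val : Matrix (Fin 3) (Fin 3) K) = (g : Matrix (Fin 3) (Fin 3) F).map (algebraMap F K) := rfl

lemma Pfull_iff (hq : IsPrimePow q) (hF : Fintype.card F = q) (hK : Fintype.card K = q ^ 2)
    {α : K} (hα : α ∉ Set.range (algebraMap F K)) (g : GL (Fin 3) F) :
    Pfull q α g ↔
      (g : Matrix (Fin 3) (Fin 3) F) 0 2 = 0 ∧ (g : Matrix (Fin 3) (Fin 3) F) 1 2 = 0 ∧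
        (condM ((g : Matrix (Fin 3) (Fin 3) F).map (algebraMap F K)) α α ∨
         condM ((g : Matrix (Fin 3) (Fin 3) F).map (algebraMap F K)) α (α ^ q)) := by
  set M := (g : Matrix (Fin 3) (Fin 3) F).map (algebraMap F K) with hMdef
  constructor
  · rintro ⟨hspan, hpair⟩
    obtain ⟨h02, h12⟩ := (span_iff g).mp hspan
    refine ⟨h02, h12, ?_⟩
    have hM0 : M 0 2 = 0 := by simp [hMdef, Matrix.map_apply, h02]
    have hM1 : M 1 2 = 0 := by simp [hMdef, Matrix.map_apply, h12]
    have hmem : Submodule.map (Matrix.toLin' M) (LinearMap.ker (ψ α)) ∈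
        ({LinearMap.ker (ψ α), LinearMap.ker (ψ (α ^ q))} : Set (Submodule K (Fin 3 → K))) := by
      rw [← hpair]; exact Set.mem_insert _ _
    rcases hmem with hU | hW
    · left
      exact (map_ker_le_iff M hM0 hM1 α α).mp (le_of_eq hU)
    · right
      exact (map_ker_le_iff M hM0 hM1 α (α ^ q)).mp
        (le_of_eq (Set.mem_singleton_iff.mp hW))
  · rintro ⟨h02, h12, hcond⟩
    have hM0 : (MK K g).val 0 2 = 0 := by
      simp [MK_val, Matrix.map_apply, h02]
    have hM1 : (MK K g).val 1 2 = 0 := by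
      simp [MK_val, Matrix.map_apply, h12]
    refine ⟨(span_iff g).mpr ⟨h02, h12⟩, ?_⟩
    have hMeq : M = (MK K g).val := rfl
    rcases hcond with h | h
    · have hUU : Submodule.map (Matrix.toLin' M) (LinearMap.ker (ψ α)) = LinearMap.ker (ψ α) := by
        rw [hMeq]; exact (map_ker_eq_iff (MK K g) hM0 hM1 α α).mpr h
      have h2 := condM_frob hq hF hK (g : Matrix (Fin 3) (Fin 3) F) (γ := α) (β := α) h
      have hWW : Submodule.map (Matrix.toLin' M) (LinearMap.ker (ψ (α ^ q))) =
          LinearMap.ker (ψ (α ^ q)) := by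
        rw [hMeq]; exact (map_ker_eq_iff (MK K g) hM0 hM1 (α ^ q) (α ^ q)).mpr h2
      rw [hUU, hWW]
    · have hUW : Submodule.map (Matrix.toLin' M) (LinearMap.ker (ψ α)) =
          LinearMap.ker (ψ (α ^ q)) := by
        rw [hMeq]; exact (map_ker_eq_iff (MK K g) hM0 hM1 α (α ^ q)).mpr h
      have h2 := condM_frob hq hF hK (g : Matrix (Fin 3) (Fin 3) F) (γ := α) (β := α ^ q) h
      rw [pow_q_q hK] at h2
      have hWU : Submodule.map (Matrix.toLin' M) (LinearMap.ker (ψ (α ^ q))) =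
          LinearMap.ker (ψ α) := by
        rw [hMeq]; exact (map_ker_eq_iff (MK K g) hM0 hM1 (α ^ q) α).mpr h2
      rw [hUW, hWU]
      exact Set.pair_comm _ _



def Pchar (q : ℕ) {F K : Type} [Field F] [Fintype F] [Field K] [Fintype K] [Algebra F K]
    (α : K) (g : GL (Fin 3) F) : Prop :=
  (g : Matrix (Fin 3) (Fin 3) F) 0 2 = 0 ∧ (g : Matrix (Fin 3) (Fin 3) F) 1 2 = 0 ∧
    (condM ((g : Matrix (Fin 3) (Fin 3) F).map (algebraMap F K)) α α ∨
     condM ((g : Matrix (Fin 3) (Fin 3) F).map (algebraMap F K)) α (α ^ q))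

def βb (α : K) (q : ℕ) (b : Bool) : K := if b then α else α ^ q

lemma βb_notMem (hq : IsPrimePow q) (hF : Fintype.card F = q) (hK : Fintype.card K = q ^ 2)
    {α : K} (hα : α ∉ Set.range (algebraMap F K)) (b : Bool) :
    βb α q b ∉ Set.range (algebraMap F K) := by
  cases b
  · simpa [βb] using pow_q_notMem hq hF hK hα
  · simpa [βb] using hα

noncomputable def matP (hq : IsPrimePow q) (hF : Fintype.card F = q)
    (hK : Fintype.card K = q ^ 2) {α : K} (hα : α ∉ Set.range (algebraMap F K))
    (b : Bool) (l : K) (r s e : F) : Matrix (Fin 3) (Fin 3) F :=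
  let B := basisβ hq hF hK (βb_notMem hq hF hK hα b)
  Matrix.of ![![B.repr l 1, B.repr (α * l) 1, 0],
              ![B.repr l 0, B.repr (α * l) 0, 0],
              ![r, s, e]]

section

variable (hq : IsPrimePow q) (hF : Fintype.card F = q) (hK : Fintype.card K = q ^ 2)
    {α : K} (hα : α ∉ Set.range (algebraMap F K))

lemma matP_apply (b : Bool) (l : K) (r s e : F) :
    matP hq hF hK hα b l r s e 0 0 =
        (basisβ hq hF hK (βb_notMem hq hF hK hα b)).repr l 1 ∧
    matP hq hF hK hα b l r s e 0 1 =
        (basisβ hq hF hK (βb_notMem hq hF hK hα b)).repr (α * l) 1 ∧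
    matP hq hF hK hα b l r s e 0 2 = 0 ∧
    matP hq hF hK hα b l r s e 1 0 =
        (basisβ hq hF hK (βb_notMem hq hF hK hα b)).repr l 0 ∧
    matP hq hF hK hα b l r s e 1 1 =
        (basisβ hq hF hK (βb_notMem hq hF hK hα b)).repr (α * l) 0 ∧
    matP hq hF hK hα b l r s e 1 2 = 0 ∧
    matP hq hF hK hα b l r s e 2 0 = r ∧
    matP hq hF hK hα b l r s e 2 1 = s ∧
    matP hq hF hK hα b l r s e 2 2 = e := by
  refine ⟨rfl, rfl, rfl, rfl, rfl, rfl, rfl, rfl, rfl⟩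

lemma matP_recompose (b : Bool) (l : K) (r s e : F) :
    algebraMap F K (matP hq hF hK hα b l r s e 0 0) +
      βb α q b * algebraMap F K (matP hq hF hK hα b l r s e 1 0) = l ∧
    algebraMap F K (matP hq hF hK hα b l r s e 0 1) +
      βb α q b * algebraMap F K (matP hq hF hK hα b l r s e 1 1) = α * l :=
  ⟨basisβ_recompose hq hF hK (βb_notMem hq hF hK hα b) l,
   basisβ_recompose hq hF hK (βb_notMem hq hF hK hα b) (α * l)⟩

lemma matP_cond (b : Bool) (l : K) (r s e : F) :
    condM ((matP hq hF hK hα b l r s e).map (algebraMap F K)) α (βb α q b) := by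
  obtain ⟨h0, h1⟩ := matP_recompose hq hF hK hα b l r s e
  unfold condM
  simp only [Matrix.map_apply]
  rw [h0, h1]

lemma matP_isUnit (b : Bool) (l : K) (hl : l ≠ 0) (r s e : F) (he : e ≠ 0) :
    IsUnit (matP hq hF hK hα b l r s e) := by
  set M := matP hq hF hK hα b l r s e with hM
  obtain ⟨h0, h1⟩ := matP_recompose hq hF hK hα b l r s e
  have hinj : Function.Injective (Matrix.toLinAlgEquiv' M) := by
    rw [← LinearMap.ker_eq_bot]
    rw [LinearMap.ker_eq_bot']
    intro v hv
    have e0 := congrFun hv 0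
    have e1 := congrFun hv 1
    have e2 := congrFun hv 2
    simp only [Matrix.toLinAlgEquiv'_apply, Matrix.mulVec, dotProduct,
      Fin.sum_univ_three, Pi.zero_apply] at e0 e1 e2
    have hrow0 : M 0 0 * v 0 + M 0 1 * v 1 = 0 := by
      have h02 : M 0 2 = 0 := (matP_apply hq hF hK hα b l r s e).2.2.1
      rw [h02] at e0; linear_combination e0
    have hrow1 : M 1 0 * v 0 + M 1 1 * v 1 = 0 := by
      have h12 : M 1 2 = 0 := (matP_apply hq hF hK hα b l r s e).2.2.2.2.2.1
      rw [h12] at e1; linear_combination e1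
    have hcomb : l * (algebraMap F K (v 0) + α * algebraMap F K (v 1)) = 0 := by
      have c0 := congrArg (algebraMap F K) hrow0
      have c1 := congrArg (algebraMap F K) hrow1
      simp only [map_add, map_mul, map_zero] at c0 c1
      rw [← hM] at h0 h1
      linear_combination (-(algebraMap F K (v 0))) * h0 - algebraMap F K (v 1) * h1 +
        c0 + βb α q b * c1
    have hv01 : v 0 = 0 ∧ v 1 = 0 := by
      rcases mul_eq_zero.mp hcomb with h | h
      · exact absurd h hl
      · exact indep hα h
    have hv2 : v 2 = 0 := by
      have h20 : M 2 0 = r := (matP_apply hq hF hK hα b l r s e).2.2.2.2.2.2.1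
      have h22 : M 2 2 = e := (matP_apply hq hF hK hα b l r s e).2.2.2.2.2.2.2.2
      rw [hv01.1, hv01.2] at e2
      simp only [mul_zero, zero_add, add_zero] at e2
      rw [h22] at e2
      exact (mul_eq_zero.mp e2).resolve_left he
    funext i
    fin_cases i
    · exact hv01.1
    · exact hv01.2
    · exact hv2
  have hbij : Function.Bijective (Matrix.toLinAlgEquiv' M) :=
    ⟨hinj, LinearMap.injective_iff_surjective.mp hinj⟩
  have hu : IsUnit (Matrix.toLinAlgEquiv' M) := (Module.End.isUnit_iff _).mpr hbij
  have := hu.map (Matrix.toLinAlgEquiv' (R := F) (n := Fin 3)).symm.toRingEquiv.toMonoidHom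
  simpa using this

lemma row0_ne (g : GL (Fin 3) F) (h00 : (g : Matrix (Fin 3) (Fin 3) F) 0 0 = 0)
    (h01 : (g : Matrix (Fin 3) (Fin 3) F) 0 1 = 0)
    (h02 : (g : Matrix (Fin 3) (Fin 3) F) 0 2 = 0) : False := by
  have hdet : (g : Matrix (Fin 3) (Fin 3) F).det ≠ 0 :=
    (Matrix.isUnit_iff_isUnit_det _).mp g.isUnit |>.ne_zero
  apply hdet
  rw [Matrix.det_fin_three, h00, h01, h02]
  ring

lemma g22_ne (g : GL (Fin 3) F) (h02 : (g : Matrix (Fin 3) (Fin 3) F) 0 2 = 0)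
    (h12 : (g : Matrix (Fin 3) (Fin 3) F) 1 2 = 0) :
    (g : Matrix (Fin 3) (Fin 3) F) 2 2 ≠ 0 := by
  intro h
  have hdet : (g : Matrix (Fin 3) (Fin 3) F).det ≠ 0 :=
    (Matrix.isUnit_iff_isUnit_det _).mp g.isUnit |>.ne_zero
  apply hdet
  rw [Matrix.det_fin_three, h02, h12, h]
  ring

/-- the canonical lambda of a matrix for branch b -/
def lamOf (b : Bool) (α : K) (q : ℕ) (g : GL (Fin 3) F) : K :=
  algebraMap F K ((g : Matrix (Fin 3) (Fin 3) F) 0 0) +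
    βb α q b * algebraMap F K ((g : Matrix (Fin 3) (Fin 3) F) 1 0)

end

section
variable {α : K}

lemma card_Pchar (hq : IsPrimePow q) (hF : Fintype.card F = q) (hK : Fintype.card K = q ^ 2)
    (hα : α ∉ Set.range (algebraMap F K)) : Nat.card {g : GL (Fin 3) F // Pchar q α g} =
    2 * ((q ^ 2 - 1) * (q ^ 2 * (q - 1))) := by
  classical
  -- the parametrization
  set f : Bool × {l : K // l ≠ 0} × (F × F) × {e : F // e ≠ 0} →
      {g : GL (Fin 3) F // Pchar q α g} := fun p =>
    ⟨(matP_isUnit hq hF hK hα p.1 p.2.1.1 p.2.1.2 p.2.2.1.1 p.2.2.1.2 p.2.2.2.1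
        p.2.2.2.2).unit, by
      set M := matP hq hF hK hα p.1 p.2.1.1 p.2.2.1.1 p.2.2.1.2 p.2.2.2.1 with hMdef
      have hval : ((matP_isUnit hq hF hK hα p.1 p.2.1.1 p.2.1.2 p.2.2.1.1 p.2.2.1.2 p.2.2.2.1
          p.2.2.2.2).unit : Matrix (Fin 3) (Fin 3) F) = M := IsUnit.unit_spec _
      refine ⟨by rw [hval]; exact (matP_apply hq hF hK hα _ _ _ _ _).2.2.1,
        by rw [hval]; exact (matP_apply hq hF hK hα _ _ _ _ _).2.2.2.2.2.1, ?_⟩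
      have hc := matP_cond hq hF hK hα p.1 p.2.1.1 p.2.2.1.1 p.2.2.1.2 p.2.2.2.1
      have hcc : condM (((matP_isUnit hq hF hK hα p.1 p.2.1.1 p.2.1.2 p.2.2.1.1 p.2.2.1.2
          p.2.2.2.1 p.2.2.2.2).unit : Matrix (Fin 3) (Fin 3) F).map (algebraMap F K)) α
          (βb α q p.1) := by
        rw [hval]; exact hc
      rcases Bool.eq_false_or_eq_true p.1 with hb | hb
      · have hβval : βb α q p.1 = α := by rw [hb]; simp [βb]
        rw [hβval] at hcc
        left
        exact hcc
      · have hβval : βb α q p.1 = α ^ q := by rw [hb]; simp [βb]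
        rw [hβval] at hcc
        right
        exact hcc⟩
  have hbij : Function.Bijective f := by
    constructor
    · rintro ⟨b1, ⟨l1, hl1⟩, ⟨r1, s1⟩, ⟨e1, he1⟩⟩ ⟨b2, ⟨l2, hl2⟩, ⟨r2, s2⟩, ⟨e2, he2⟩⟩ hf
      have hmat : matP hq hF hK hα b1 l1 r1 s1 e1 = matP hq hF hK hα b2 l2 r2 s2 e2 := by
        have := congrArg (fun x => ((x : {g : GL (Fin 3) F // Pchar q α g}) :
          GL (Fin 3) F).val) hf
        simpa [f, IsUnit.unit_spec] using this
      -- branches agree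
      have hb : b1 = b2 := by
        by_contra hne
        have hg : IsUnit (matP hq hF hK hα b1 l1 r1 s1 e1) :=
          matP_isUnit hq hF hK hα b1 l1 hl1 r1 s1 e1 he1
        have h02 : (hg.unit : Matrix (Fin 3) (Fin 3) F) 0 2 = 0 := by
          rw [IsUnit.unit_spec]; exact (matP_apply hq hF hK hα _ _ _ _ _).2.2.1
        have hc1 := matP_cond hq hF hK hα b1 l1 r1 s1 e1
        have hc2 := matP_cond hq hF hK hα b2 l2 r2 s2 e2
        rw [← hmat] at hc2
        have hval : (hg.unit : Matrix (Fin 3) (Fin 3) F) = matP hq hF hK hα b1 l1 r1 s1 e1 :=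
          IsUnit.unit_spec _
        cases hb1 : b1 <;> cases hb2 : b2
        · exact hne (by rw [hb1, hb2])
        · refine condM_disjoint hq hF hK hα hg.unit h02 ?_ ?_
          · rw [hval]; simpa [βb, hb2] using hc2
          · rw [hval]; simpa [βb, hb1] using hc1
        · refine condM_disjoint hq hF hK hα hg.unit h02 ?_ ?_
          · rw [hval]; simpa [βb, hb1] using hc1
          · rw [hval]; simpa [βb, hb2] using hc2
        · exact hne (by rw [hb1, hb2])
      subst hb
      -- lambdas agree
      have hl : l1 = l2 := by
        have h1 := (matP_recompose hq hF hK hα b1 l1 r1 s1 e1).1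
        have h2 := (matP_recompose hq hF hK hα b1 l2 r2 s2 e2).1
        rw [← hmat] at h2
        rw [← h1, ← h2]
      have hr : r1 = r2 := by
        have := congrFun (congrFun hmat 2) 0
        simpa [matP] using this
      have hs : s1 = s2 := by
        have := congrFun (congrFun hmat 2) 1
        simpa [matP] using this
      have he : e1 = e2 := by
        have := congrFun (congrFun hmat 2) 2
        simpa [matP] using this
      simp [hl, hr, hs, he]
    · rintro ⟨g, h02, h12, hcond⟩
      -- choose branch
      have main : ∀ b : Bool, condM ((g : Matrix (Fin 3) (Fin 3) F).map (algebraMap F K)) α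
          (βb α q b) → ∃ p, f p = ⟨g, h02, h12, hcond⟩ := by
        intro b hc
        set β := βb α q b with hβdef
        have hβ : β ∉ Set.range (algebraMap F K) := βb_notMem hq hF hK hα b
        set l := lamOf b α q g with hldef
        have hl : l ≠ 0 := by
          intro h0
          have h00 : (g : Matrix (Fin 3) (Fin 3) F) 0 0 = 0 ∧
              (g : Matrix (Fin 3) (Fin 3) F) 1 0 = 0 := indep hβ h0
          have hα0 : algebraMap F K ((g : Matrix (Fin 3) (Fin 3) F) 0 1) +
              β * algebraMap F K ((g : Matrix (Fin 3) (Fin 3) F) 1 1) = 0 := by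
            unfold condM at hc
            simp only [Matrix.map_apply] at hc
            rw [hc]
            rw [hldef] at h0
            unfold lamOf at h0
            rw [h0, mul_zero]
          have h01 : (g : Matrix (Fin 3) (Fin 3) F) 0 1 = 0 ∧
              (g : Matrix (Fin 3) (Fin 3) F) 1 1 = 0 := indep hβ hα0
          exact row0_ne g h00.1 h01.1 h02
        have he : (g : Matrix (Fin 3) (Fin 3) F) 2 2 ≠ 0 := g22_ne g h02 h12
        refine ⟨⟨b, ⟨l, hl⟩, ⟨(g : Matrix (Fin 3) (Fin 3) F) 2 0,
          (g : Matrix (Fin 3) (Fin 3) F) 2 1⟩, ⟨(g : Matrix (Fin 3) (Fin 3) F) 2 2, he⟩⟩, ?_⟩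
        have hmat : matP hq hF hK hα b l ((g : Matrix (Fin 3) (Fin 3) F) 2 0)
            ((g : Matrix (Fin 3) (Fin 3) F) 2 1) ((g : Matrix (Fin 3) (Fin 3) F) 2 2) =
            (g : Matrix (Fin 3) (Fin 3) F) := by
          set B := basisβ hq hF hK hβ with hB
          have hrepr_l : B.repr l = Finsupp.single 0 ((g : Matrix (Fin 3) (Fin 3) F) 1 0) +
              Finsupp.single 1 ((g : Matrix (Fin 3) (Fin 3) F) 0 0) := by
            rw [hldef]
            exact basisβ_repr hq hF hK hβ _ _
          have hrepr_al : B.repr (α * l) =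
              Finsupp.single 0 ((g : Matrix (Fin 3) (Fin 3) F) 1 1) +
              Finsupp.single 1 ((g : Matrix (Fin 3) (Fin 3) F) 0 1) := by
            have : α * l = algebraMap F K ((g : Matrix (Fin 3) (Fin 3) F) 0 1) +
                β * algebraMap F K ((g : Matrix (Fin 3) (Fin 3) F) 1 1) := by
              unfold condM at hc
              simp only [Matrix.map_apply] at hc
              rw [hldef]
              unfold lamOf
              rw [← hβdef]
              linear_combination -hc
            rw [this]
            exact basisβ_repr hq hF hK hβ _ _
          ext i j
          fin_cases i <;> fin_cases j <;>
            simp [matP, ← hB, hrepr_l, hrepr_al, h02, h12, Finsupp.single_apply]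
        exact Subtype.ext (Units.ext ((IsUnit.unit_spec _).trans hmat))
      cases hcond with
      | inl h => exact main true (by simpa [βb] using h)
      | inr h => exact main false (by simpa [βb] using h)
  -- cardinality of the parameter space
  have key := Nat.card_eq_of_bijective f hbij
  rw [← key]
  have c1 : Nat.card Bool = 2 := by simp [Nat.card_eq_fintype_card]
  have c2 : Nat.card {l : K // l ≠ 0} = q ^ 2 - 1 := by
    have h := Nat.card_congr (unitsEquivNeZero (G₀ := K))
    rw [Nat.card_eq_fintype_card, Fintype.card_units, hK] at h
    exact h.symm
  have c3 : Nat.card (F × F) = q ^ 2 := by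
    rw [Nat.card_prod, Nat.card_eq_fintype_card, hF, sq]
  have c4 : Nat.card {e : F // e ≠ 0} = q - 1 := by
    have h := Nat.card_congr (unitsEquivNeZero (G₀ := F))
    rw [Nat.card_eq_fintype_card, Fintype.card_units, hF] at h
    exact h.symm
  rw [Nat.card_prod, Nat.card_prod, Nat.card_prod, c1, c2, c3, c4]

end



noncomputable def scalarGL (c : Fˣ) : GL (Fin 3) F :=
  Units.map (Matrix.scalar (Fin 3)).toMonoidHom c

lemma scalarGL_val (c : Fˣ) :
    (scalarGL c : Matrix (Fin 3) (Fin 3) F) = Matrix.scalar (Fin 3) (c : F) := rfl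

lemma scalarGL_mem_center (c : Fˣ) : scalarGL c ∈ Subgroup.center (GL (Fin 3) F) := by
  rw [Subgroup.mem_center_iff]
  intro g
  apply Units.ext
  rw [Units.val_mul, Units.val_mul, scalarGL_val]
  exact (Matrix.scalar_commute (c : F) (fun r => mul_comm _ _)
    (g : Matrix (Fin 3) (Fin 3) F)).eq.symm

lemma center_exists_scalar {z : GL (Fin 3) F} (hz : z ∈ Subgroup.center (GL (Fin 3) F)) :
    ∃ c : Fˣ, scalarGL c = z := by
  have hcomm : ∀ t : Matrix.TransvectionStruct (Fin 3) F,
      Commute t.toMatrix (z : Matrix (Fin 3) (Fin 3) F) := by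
    intro t
    have htu : IsUnit t.toMatrix := by
      rw [Matrix.isUnit_iff_isUnit_det, Matrix.TransvectionStruct.det]
      exact isUnit_one
    have := Subgroup.mem_center_iff.mp hz htu.unit
    have hvals := congrArg Units.val this
    rw [Units.val_mul, Units.val_mul, IsUnit.unit_spec] at hvals
    exact hvals
  obtain ⟨c, hc⟩ := Matrix.mem_range_scalar_of_commute_transvectionStruct hcomm
  have hcu : IsUnit c := by
    have hdet : IsUnit (z : Matrix (Fin 3) (Fin 3) F).det :=
      (Matrix.isUnit_iff_isUnit_det _).mp z.isUnit
    rw [← hc, Matrix.scalar_apply, Matrix.det_diagonal] at hdet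
    simp only [Finset.prod_const, Finset.card_univ, Fintype.card_fin] at hdet
    exact (isUnit_pow_iff (by norm_num)).mp hdet
  refine ⟨hcu.unit, ?_⟩
  apply Units.ext
  rw [scalarGL_val, IsUnit.unit_spec]
  exact hc

lemma center_equiv_units : Nat.card (Subgroup.center (GL (Fin 3) F)) = Nat.card Fˣ := by
  have hbij : Function.Bijective
      (fun c : Fˣ => (⟨scalarGL c, scalarGL_mem_center c⟩ :
        Subgroup.center (GL (Fin 3) F))) := by
    constructor
    · intro c1 c2 h
      have hval := congrArg (fun z => ((z : Subgroup.center (GL (Fin 3) F)) :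
      GL (Fin 3) F).val 0 0) h
      simp only [scalarGL_val, Matrix.scalar_apply, Matrix.diagonal_apply_eq] at hval
      exact Units.ext hval
    · rintro ⟨z, hz⟩
      have hcomm : ∀ t : Matrix.TransvectionStruct (Fin 3) F,
          Commute t.toMatrix (z : Matrix (Fin 3) (Fin 3) F) := by
        intro t
        have htu : IsUnit t.toMatrix := by
          rw [Matrix.isUnit_iff_isUnit_det, Matrix.TransvectionStruct.det]
          exact isUnit_one
        have := Subgroup.mem_center_iff.mp hz htu.unit
        have hvals := congrArg Units.val this
        rw [Units.val_mul, Units.val_mul, IsUnit.unit_spec] at hvals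
        exact hvals
      obtain ⟨c, hc⟩ := Matrix.mem_range_scalar_of_commute_transvectionStruct hcomm
      have hcu : IsUnit c := by
        have hdet : IsUnit (z : Matrix (Fin 3) (Fin 3) F).det :=
          (Matrix.isUnit_iff_isUnit_det _).mp z.isUnit
        rw [← hc, Matrix.scalar_apply, Matrix.det_diagonal] at hdet
        simp only [Finset.prod_const, Finset.card_univ, Fintype.card_fin] at hdet
        exact (isUnit_pow_iff (by norm_num)).mp hdet
      refine ⟨hcu.unit, ?_⟩
      apply Subtype.ext
      apply Units.ext
      rw [scalarGL_val, IsUnit.unit_spec]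
      exact hc
  have e := Equiv.ofBijective _ hbij
  exact (Nat.card_congr e).symm

lemma center_card (hF : Fintype.card F = q) :
    Nat.card (Subgroup.center (GL (Fin 3) F)) = q - 1 := by
  rw [center_equiv_units, Nat.card_eq_fintype_card, Fintype.card_units, hF]



lemma map_GL_one_F (S : Submodule F (Fin 3 → F)) :
    Submodule.map (Matrix.toLin' ((1 : GL (Fin 3) F) : Matrix (Fin 3) (Fin 3) F)) S = S := by
  rw [Units.val_one, Matrix.toLin'_one, Submodule.map_id]

lemma map_GL_mul_F (g h : GL (Fin 3) F) (S : Submodule F (Fin 3 → F)) :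
    Submodule.map (Matrix.toLin' ((g * h : GL (Fin 3) F) : Matrix (Fin 3) (Fin 3) F)) S =
      Submodule.map (Matrix.toLin' (g : Matrix (Fin 3) (Fin 3) F))
        (Submodule.map (Matrix.toLin' (h : Matrix (Fin 3) (Fin 3) F)) S) := by
  rw [Units.val_mul, Matrix.toLin'_mul, Submodule.map_comp]

lemma map_GL_inv_F (g : GL (Fin 3) F) (S : Submodule F (Fin 3 → F)) :
    Submodule.map (Matrix.toLin' ((g⁻¹ : GL (Fin 3) F) : Matrix (Fin 3) (Fin 3) F))
      (Submodule.map (Matrix.toLin' (g : Matrix (Fin 3) (Fin 3) F)) S) = S := by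
  rw [← map_GL_mul_F, inv_mul_cancel, map_GL_one_F]

lemma map_GL_one_K (S : Submodule K (Fin 3 → K)) :
    Submodule.map (Matrix.toLin' (((1 : GL (Fin 3) F) : Matrix (Fin 3) (Fin 3) F).map
      (algebraMap F K))) S = S := by
  have h1 : ((1 : GL (Fin 3) F) : Matrix (Fin 3) (Fin 3) F).map (algebraMap F K) = 1 := by
    rw [Units.val_one]
    exact Matrix.map_one _ (map_zero _) (map_one _)
  rw [h1, Matrix.toLin'_one, Submodule.map_id]

lemma map_GL_mul_K (g h : GL (Fin 3) F) (S : Submodule K (Fin 3 → K)) :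
    Submodule.map (Matrix.toLin' (((g * h : GL (Fin 3) F) : Matrix (Fin 3) (Fin 3) F).map
      (algebraMap F K))) S =
      Submodule.map (Matrix.toLin' ((g : Matrix (Fin 3) (Fin 3) F).map (algebraMap F K)))
        (Submodule.map (Matrix.toLin' ((h : Matrix (Fin 3) (Fin 3) F).map (algebraMap F K)))
          S) := by
  rw [Units.val_mul, Matrix.map_mul, Matrix.toLin'_mul, Submodule.map_comp]

lemma map_GL_inv_K (g : GL (Fin 3) F) (S : Submodule K (Fin 3 → K)) :
    Submodule.map (Matrix.toLin' (((g⁻¹ : GL (Fin 3) F) : Matrix (Fin 3) (Fin 3) F).map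
      (algebraMap F K)))
      (Submodule.map (Matrix.toLin' ((g : Matrix (Fin 3) (Fin 3) F).map (algebraMap F K))) S)
      = S := by
  rw [← map_GL_mul_K, inv_mul_cancel, map_GL_one_K]

noncomputable def Hgrp (q : ℕ) {F K : Type} [Field F] [Fintype F] [Field K] [Fintype K]
    [Algebra F K] (α : K) : Subgroup (GL (Fin 3) F) where
  carrier := {g | Pfull q α g}
  one_mem' := by
    refine ⟨map_GL_one_F _, ?_⟩
    rw [map_GL_one_K, map_GL_one_K]
  mul_mem' := by
    rintro a b ⟨ha1, ha2⟩ ⟨hb1, hb2⟩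
    refine ⟨?_, ?_⟩
    · rw [map_GL_mul_F, hb1, ha1]
    · rw [map_GL_mul_K, map_GL_mul_K]
      rcases Set.pair_eq_pair_iff.mp hb2 with ⟨h1, h2⟩ | ⟨h1, h2⟩
      · rw [h1, h2]; exact ha2
      · rw [h1, h2, Set.pair_comm]
        exact ha2
  inv_mem' := by
    rintro g ⟨h1, h2⟩
    refine ⟨?_, ?_⟩
    · conv_lhs => rw [← h1]
      exact map_GL_inv_F g _
    · rcases Set.pair_eq_pair_iff.mp h2 with ⟨hU, hW⟩ | ⟨hU, hW⟩
      · rw [Set.pair_eq_pair_iff]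
        left
        constructor
        · conv_lhs => rw [← hU]
          exact map_GL_inv_K g _
        · conv_lhs => rw [← hW]
          exact map_GL_inv_K g _
      · rw [Set.pair_eq_pair_iff]
        right
        constructor
        · conv_lhs => rw [← hW]
          exact map_GL_inv_K g _
        · conv_lhs => rw [← hU]
          exact map_GL_inv_K g _

lemma mem_Hgrp {α : K} {g : GL (Fin 3) F} : g ∈ Hgrp q α ↔ Pfull q α g := Iff.rfl

lemma smul_id_map {c : K} (hc : c ≠ 0) (p : Submodule K (Fin 3 → K)) :
    Submodule.map (c • (LinearMap.id : (Fin 3 → K) →ₗ[K] (Fin 3 → K))) p = p := by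
  ext x
  simp only [Submodule.mem_map, LinearMap.smul_apply, LinearMap.id_apply]
  constructor
  · rintro ⟨y, hy, rfl⟩
    exact Submodule.smul_mem _ _ hy
  · intro hx
    exact ⟨c⁻¹ • x, Submodule.smul_mem _ _ hx, by rw [smul_smul, mul_inv_cancel₀ hc, one_smul]⟩

lemma smul_id_map_F {c : F} (hc : c ≠ 0) (p : Submodule F (Fin 3 → F)) :
    Submodule.map (c • (LinearMap.id : (Fin 3 → F) →ₗ[F] (Fin 3 → F))) p = p := by
  ext x
  simp only [Submodule.mem_map, LinearMap.smul_apply, LinearMap.id_apply]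
  constructor
  · rintro ⟨y, hy, rfl⟩
    exact Submodule.smul_mem _ _ hy
  · intro hx
    exact ⟨c⁻¹ • x, Submodule.smul_mem _ _ hx, by rw [smul_smul, mul_inv_cancel₀ hc, one_smul]⟩

lemma toLin'_scalar {R : Type} [CommRing R] (c : R) :
    Matrix.toLin' (Matrix.scalar (Fin 3) c) =
      c • (LinearMap.id : (Fin 3 → R) →ₗ[R] (Fin 3 → R)) := by
  ext v i
  simp [Matrix.toLin'_apply, Matrix.scalar_apply, Matrix.mulVec_diagonal]

lemma scalar_map_algebraMap (c : F) :
    (Matrix.scalar (Fin 3) c).map (algebraMap F K) =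
      Matrix.scalar (Fin 3) (algebraMap F K c) := by
  ext i j
  simp only [Matrix.map_apply, Matrix.scalar_apply, Matrix.diagonal_apply]
  split_ifs <;> simp

lemma center_le_Hgrp {α : K} : Subgroup.center (GL (Fin 3) F) ≤ Hgrp q α := by
  intro z hz
  obtain ⟨c, rfl⟩ := center_exists_scalar hz
  rw [mem_Hgrp]
  have hcF : (c : F) ≠ 0 := Units.ne_zero c
  have hcK : algebraMap F K (c : F) ≠ 0 := by
    simpa using fun h => hcF ((algebraMap F K).injective (by simpa using h))
  constructor
  · rw [scalarGL_val, toLin'_scalar, smul_id_map_F hcF]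
  · rw [scalarGL_val, scalar_map_algebraMap, toLin'_scalar, smul_id_map hcK, smul_id_map hcK]

lemma final (hq : IsPrimePow q) (hF : Fintype.card F = q) (hK : Fintype.card K = q ^ 2)
    {α : K} (hα : α ∉ Set.range (algebraMap F K)) :
    Nat.card {x : GL (Fin 3) F ⧸ Subgroup.center (GL (Fin 3) F) //
      ∃ g : GL (Fin 3) F, (QuotientGroup.mk g :
        GL (Fin 3) F ⧸ Subgroup.center (GL (Fin 3) F)) = x ∧ Pfull q α g} =
      2 * (q ^ 4 - q ^ 2) := by
  classical
  set Z := Subgroup.center (GL (Fin 3) F) with hZ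
  set H : Subgroup (GL (Fin 3) F) := Hgrp q α with hH
  -- identify the subtype with the image subgroup
  have e1 : Nat.card {x : GL (Fin 3) F ⧸ Z //
      ∃ g : GL (Fin 3) F, (QuotientGroup.mk g : GL (Fin 3) F ⧸ Z) = x ∧ Pfull q α g} =
      Nat.card (H.map (QuotientGroup.mk' Z)) := by
    refine Nat.card_congr (Equiv.subtypeEquivRight fun x => ?_)
    rw [Subgroup.mem_map]
    constructor
    · rintro ⟨g, hgx, hgP⟩
      exact ⟨g, hgP, hgx⟩
    · rintro ⟨g, hgP, hgx⟩
      exact ⟨g, hgx, hgP⟩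
  rw [e1]
  -- cardinality of H
  have e2 : Nat.card H = 2 * ((q ^ 2 - 1) * (q ^ 2 * (q - 1))) := by
    have h1 : Nat.card H = Nat.card {g : GL (Fin 3) F // Pchar q α g} := by
      refine Nat.card_congr (Equiv.subtypeEquivRight fun g => ?_)
      rw [hH, mem_Hgrp]
      exact Pfull_iff hq hF hK hα g
    rw [h1, card_Pchar hq hF hK hα]
  -- multiplicativity
  set ρ : H →* GL (Fin 3) F ⧸ Z := (QuotientGroup.mk' Z).comp H.subtype with hρ
  have hker : ρ.ker = Z.subgroupOf H := by
    rw [hρ, ← MonoidHom.comap_ker, QuotientGroup.ker_mk']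
    rfl
  have hrange : ρ.range = H.map (QuotientGroup.mk' Z) := by
    rw [hρ, MonoidHom.range_comp, Subgroup.range_subtype]
  have e3 : Nat.card H =
      Nat.card (H.map (QuotientGroup.mk' Z)) * Nat.card Z := by
    have h4 := Subgroup.card_eq_card_quotient_mul_card_subgroup ρ.ker
    have h5 : Nat.card (↥H ⧸ ρ.ker) = Nat.card (H.map (QuotientGroup.mk' Z)) := by
      rw [← hrange]
      exact Nat.card_congr (QuotientGroup.quotientKerEquivRange ρ).toEquiv
    have h6 : Nat.card ρ.ker = Nat.card Z := by
      rw [hker]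
      exact Nat.card_congr (Subgroup.subgroupOfEquivOfLe (center_le_Hgrp (α := α))).toEquiv
    rw [h4, h5, h6]
  have hq2 : 2 ≤ q := hq.two_le
  have hZcard : Nat.card Z = q - 1 := center_card hF
  have e4 : Nat.card (H.map (QuotientGroup.mk' Z)) * (q - 1) =
      2 * ((q ^ 2 - 1) * (q ^ 2 * (q - 1))) := by
    have h := e3.symm.trans e2
    rw [hZcard] at h
    exact h
  have harith : 2 * ((q ^ 2 - 1) * (q ^ 2 * (q - 1))) = (2 * (q ^ 4 - q ^ 2)) * (q - 1) := by
    have h44 : q ^ 4 = q ^ 2 * q ^ 2 := by ring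
    have h42 : q ^ 4 - q ^ 2 = q ^ 2 * (q ^ 2 - 1) := by
      rw [h44, Nat.mul_sub, mul_one]
    rw [h42]
    ring
  have hpos : 0 < q - 1 := by omega
  exact Nat.eq_of_mul_eq_mul_right hpos (e4.trans harith)

end Stab9

/-- Let `q` be a prime power, `F = 𝔽_q`, `K = 𝔽_{q²}` with `α ∈ K ∖ F`.
With `U = {(x,y,z) ∈ K³ : x + α·y = 0}` and `W = {(x,y,z) ∈ K³ : x + α^q·y = 0}`, the
subgroup of `PGL₃(𝔽_q) = GL₃(𝔽_q)/center` consisting of the classes of matrices `g` with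
`g·span(e₃) = span(e₃)` in `F³` and, viewing `g` as a matrix over `K`,
`{g·U, g·W} = {U, W}`, has cardinality `2(q⁴ − q²)`. -/
theorem stab_nonsplit_node_card (q : ℕ) (hq : IsPrimePow q)
    (F : Type) [Field F] [Fintype F] (hF : Fintype.card F = q)
    (K : Type) [Field K] [Fintype K] [Algebra F K] (hK : Fintype.card K = q ^ 2)
    (α : K) (hα : α ∉ Set.range (algebraMap F K)) :
    Nat.card {x : GL (Fin 3) F ⧸ Subgroup.center (GL (Fin 3) F) //
      ∃ g : GL (Fin 3) F, (QuotientGroup.mk g :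
          GL (Fin 3) F ⧸ Subgroup.center (GL (Fin 3) F)) = x ∧
        Submodule.map (Matrix.toLin' (g : Matrix (Fin 3) (Fin 3) F))
            (Submodule.span F {(Pi.single 2 1 : Fin 3 → F)}) =
          Submodule.span F {(Pi.single 2 1 : Fin 3 → F)} ∧
        ({Submodule.map (Matrix.toLin' ((g : Matrix (Fin 3) (Fin 3) F).map (algebraMap F K)))
              (LinearMap.ker ((LinearMap.proj 0 : (Fin 3 → K) →ₗ[K] K) +
                α • (LinearMap.proj 1 : (Fin 3 → K) →ₗ[K] K))),
          Submodule.map (Matrix.toLin' ((g : Matrix (Fin 3) (Fin 3) F).map (algebraMap F K)))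
              (LinearMap.ker ((LinearMap.proj 0 : (Fin 3 → K) →ₗ[K] K) +
                (α ^ q) • (LinearMap.proj 1 : (Fin 3 → K) →ₗ[K] K)))} :
            Set (Submodule K (Fin 3 → K))) =
          {LinearMap.ker ((LinearMap.proj 0 : (Fin 3 → K) →ₗ[K] K) +
              α • (LinearMap.proj 1 : (Fin 3 → K) →ₗ[K] K)),
           LinearMap.ker ((LinearMap.proj 0 : (Fin 3 → K) →ₗ[K] K) +
              (α ^ q) • (LinearMap.proj 1 : (Fin 3 → K) →ₗ[K] K))}} =
    2 * (q ^ 4 - q ^ 2) :=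
  Stab9.final hq hF hK hα
end
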